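/- arXiv:2105.07550 — 5 statements merged into one kernel-verified Lean document; each statement's English description precedes it below -/
import Mathlib

section
/- Let i ≥ 1 and let N_i denote the number of monic irreducible polynomials of degree i over F_q. If m ≥ i·N_i + w and a_1, ..., a_w ∈ F_q are fixed, then the number of monic polynomials of degree m over F_q of the form x^m + a_1 x^{m-1} + ... + a_w x^{m-w} + g(x), with deg g ≤ m−w−1, that have exactly r distinct irreducible factors of degree i, equals q^{m-w} · C(N_i, r) · (1/q^i)^r · (1 − 1/q^i)^{N_i − r}. -/
open Polynomial Finset

private lemma count_exact_zeros {ι : Type*} [Fintype ι] [DecidableEq ι]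
    (Q : ι → Type*) [∀ j, Fintype (Q j)] [∀ j, DecidableEq (Q j)] [∀ j, Zero (Q j)]
    (N : ℕ) (hQ : ∀ j, Fintype.card (Q j) = N) (r : ℕ) :
    (Finset.univ.filter (fun f : ∀ j, Q j =>
      (Finset.univ.filter (fun j => f j = 0)).card = r)).card
      = (Fintype.card ι).choose r * (N - 1) ^ (Fintype.card ι - r) := by
  have hsplit : (Finset.univ.filter (fun f : ∀ j, Q j =>
      (Finset.univ.filter (fun j => f j = 0)).card = r))
      = (Finset.univ.powersetCard r).biUnion
        (fun S => Finset.univ.filter (fun f : ∀ j, Q j =>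
          (Finset.univ.filter (fun j => f j = 0)) = S)) := by
    ext f
    simp only [mem_filter, mem_univ, true_and, mem_biUnion, mem_powersetCard]
    constructor
    · intro h
      exact ⟨_, ⟨subset_univ _, h⟩, rfl⟩
    · rintro ⟨S, ⟨-, hS⟩, rfl⟩; exact hS
  rw [hsplit, card_biUnion]
  · have hpiece : ∀ S ∈ Finset.univ.powersetCard r,
        (Finset.univ.filter (fun f : ∀ j, Q j =>
          (Finset.univ.filter (fun j => f j = 0)) = S)).card = (N - 1) ^ (Fintype.card ι - r) := by
      intro S hS
      rw [mem_powersetCard] at hS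
      have : (Finset.univ.filter (fun f : ∀ j, Q j =>
          (Finset.univ.filter (fun j => f j = 0)) = S))
          = Fintype.piFinset (fun j => if j ∈ S then {(0 : Q j)} else {(0 : Q j)}ᶜ) := by
        ext f
        simp only [mem_filter, mem_univ, true_and, Fintype.mem_piFinset]
        constructor
        · intro h j
          by_cases hj : j ∈ S <;> simp [hj]
          · rw [← h] at hj; simpa using hj
          · intro h0
            exact hj (by rw [← h]; simpa using h0)
        · intro h
          ext j
          have := h j
          by_cases hj : j ∈ S <;> simp [hj] at this <;> simp [hj, this]
      rw [this, Fintype.card_piFinset]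
      have : ∀ j, (if j ∈ S then ({(0 : Q j)} : Finset (Q j)) else {(0:Q j)}ᶜ).card
          = if j ∈ S then 1 else N - 1 := by
        intro j
        by_cases hj : j ∈ S <;> simp [hj, card_compl, hQ j]
      rw [Finset.prod_congr rfl (fun j _ => this j)]
      rw [← Finset.prod_mul_prod_compl S]
      rw [Finset.prod_congr rfl (fun j hj => if_pos hj), Finset.prod_const_one, one_mul]
      rw [Finset.prod_congr rfl (fun j hj => if_neg (Finset.mem_compl.mp hj)),
        Finset.prod_const, Finset.card_compl, hS.2]
    rw [Finset.sum_congr rfl hpiece, Finset.sum_const, Finset.card_powersetCard, card_univ]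
    simp [mul_comm]
  · intro S hS T hT hST
    refine Finset.disjoint_left.mpr ?_
    intro f hf hf'
    simp only [mem_filter] at hf hf'
    exact hST (hf.2 ▸ hf'.2 ▸ rfl)

/-- If `m ≥ i·N_i + w`, the number of monic polynomials
`x^m + a_1 x^(m-1) + ... + a_w x^(m-w) + g(x)` (with `deg g ≤ m-w-1`) that have exactly `r`
distinct monic irreducible factors of degree `i` equals
`q^(m-w) · C(N_i, r) · (1/q^i)^r · (1 − 1/q^i)^(N_i − r)`. -/
theorem stmt_10 (q : ℕ) (F : Type*) [Field F] [Fintype F] (hF : Fintype.card F = q)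
    (i : ℕ) (hi : 1 ≤ i) (Ni : ℕ)
    (hNi : Ni = Nat.card {h : Polynomial F // h.Monic ∧ Irreducible h ∧ h.natDegree = i})
    (w m r : ℕ) (hm : i * Ni + w ≤ m) (a : Fin w → F) :
    (Nat.card {g : Polynomial F // g.Monic ∧ g.natDegree = m ∧
        (∀ k : Fin w, g.coeff (m - (k + 1)) = a k) ∧
        Nat.card {h : Polynomial F // h.Monic ∧ Irreducible h ∧ h.natDegree = i ∧ h ∣ g} = r}
      : ℚ) =
      (q : ℚ) ^ (m - w) * (Ni.choose r) * (1 / (q : ℚ) ^ i) ^ r *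
        (1 - 1 / (q : ℚ) ^ i) ^ (Ni - r) := by
  classical
  have hq2 : 2 ≤ q := by rw [← hF]; exact Fintype.one_lt_card
  set ιT := {h : Polynomial F // h.Monic ∧ Irreducible h ∧ h.natDegree = i} with hιT
  haveI : Finite ιT := by
    have : Finite (Polynomial.degreeLT F (i+1)) :=
      Finite.of_equiv _ (Polynomial.degreeLTEquiv F (i+1)).toEquiv.symm
    apply Finite.of_injective (fun h : ιT => (⟨h.1, ?_⟩ : Polynomial.degreeLT F (i+1)))
    · intro h h' hh
      exact Subtype.ext (congrArg Subtype.val hh :)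
    · rw [Polynomial.mem_degreeLT]
      calc h.1.degree ≤ h.1.natDegree := Polynomial.degree_le_natDegree
        _ < (i+1 : ℕ) := by rw [h.2.2.2]; exact_mod_cast Nat.lt_succ_self i
  haveI : Fintype ιT := Fintype.ofFinite _
  have hcard_ι : Fintype.card ιT = Ni := by rw [hNi, Nat.card_eq_fintype_card]
  have hwm : w ≤ m := by omega
  -- the quotient rings
  have hne0 : ∀ h : ιT, h.1 ≠ 0 := fun h => h.2.1.ne_zero
  set Q : ιT → Type _ := fun h => AdjoinRoot h.1 with hQ
  have hEq : ∀ h : ιT, Q h ≃ (Fin i → F) := fun h =>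
    ((AdjoinRoot.powerBasis (hne0 h)).basis.reindex
      (finCongr (by rw [AdjoinRoot.powerBasis_dim, h.2.2.2]))).equivFun.toEquiv
  haveI : ∀ h : ιT, Fintype (Q h) := fun h => Fintype.ofEquiv _ (hEq h).symm
  have hQcard : ∀ h : ιT, Fintype.card (Q h) = q ^ i := by
    intro h
    rw [Fintype.card_congr (hEq h)]
    simp [hF]
  -- the reduction map
  set ψ : Polynomial F → ∀ h : ιT, Q h := fun p h => AdjoinRoot.mk h.1 p with hψ
  have hψ_zero : ∀ (p : Polynomial F) (h : ιT), ψ p h = 0 ↔ h.1 ∣ p := by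
    intro p h; exact AdjoinRoot.mk_eq_zero
  have hψ_add : ∀ p p' : Polynomial F, ψ (p + p') = ψ p + ψ p' := by
    intro p p'; funext h; exact map_add _ _ _
  have hψ_sub : ∀ p p' : Polynomial F, ψ (p - p') = ψ p - ψ p' := by
    intro p p'; funext h; exact map_sub _ _ _
  -- CRT surjectivity with degree bound
  set n := m - w with hn
  have hnm : i * Ni ≤ n := by omega
  have hsurj : ∀ y : ∀ h : ιT, Q h,
      ∃ p : Polynomial F, p ∈ Polynomial.degreeLT F n ∧ ψ p = y := by
    intro y
    set H : Polynomial F := ∏ h : ιT, h.1 with hH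
    have hHmonic : H.Monic := monic_prod_of_monic _ _ (fun h _ => h.2.1)
    have hHdeg : H.natDegree = i * Ni := by
      rw [hH, natDegree_prod _ _ (fun h _ => hne0 h)]
      rw [Finset.sum_congr rfl (fun h _ => h.2.2.2), Finset.sum_const, card_univ, hcard_ι,
        smul_eq_mul, mul_comm]
    have hpair : Pairwise fun (h h' : ιT) =>
        IsCoprime (Ideal.span {h.1} : Ideal (Polynomial F)) (Ideal.span {h'.1}) := by
      intro h h' hne
      rw [Ideal.isCoprime_span_singleton_iff]
      refine (h.2.2.1).coprime_iff_not_dvd.2 ?_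
      intro hdvd
      exact hne (Subtype.ext (Polynomial.eq_of_monic_of_associated h.2.1 h'.2.1
        ((h.2.2.1).associated_of_dvd h'.2.2.1 hdvd)))
    obtain ⟨p0, hp0⟩ := Ideal.pi_quotient_surjective hpair y
    refine ⟨p0 %ₘ H, ?_, ?_⟩
    · rw [Polynomial.mem_degreeLT]
      calc (p0 %ₘ H).degree < H.degree := degree_modByMonic_lt _ hHmonic
        _ ≤ (n : ℕ) := by
          rw [degree_eq_natDegree hHmonic.ne_zero, hHdeg]
          exact_mod_cast Nat.cast_le.mpr hnm
    · funext h
      have hdvd : h.1 ∣ p0 %ₘ H - p0 := by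
        have h2 : p0 %ₘ H = p0 - H * (p0 /ₘ H) := modByMonic_eq_sub_mul_div _ _
        rw [h2, sub_sub_cancel_left]
        exact (Finset.dvd_prod_of_mem _ (mem_univ h)).mul_right _ |>.neg_right
      have h3 : AdjoinRoot.mk h.1 (p0 %ₘ H) = AdjoinRoot.mk h.1 p0 :=
        (AdjoinRoot.mk_eq_mk).2 hdvd
      exact h3.trans (hp0 h)
  -- the base polynomial
  set base : Polynomial F := X ^ m + ∑ k : Fin w, C (a k) * X ^ (m - (k + 1 : ℕ)) with hbase
  have hterm : ∀ (j : ℕ) (k' : Fin w),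
      (C (a k') * X ^ (m - (k'.1 + 1))).coeff j = if m - (k'.1+1) = j then a k' else 0 := by
    intro j k'
    rw [coeff_C_mul, coeff_X_pow]
    by_cases h : m - (k'.1 + 1) = j
    · simp [h]
    · simp [h, Ne.symm h]
  have hbase_coeff : ∀ k : Fin w, base.coeff (m - (k + 1 : ℕ)) = a k := by
    intro k
    rw [hbase, coeff_add, coeff_X_pow, if_neg (by have := k.isLt; omega), finset_sum_coeff]
    rw [Finset.sum_congr rfl (fun k' _ => hterm _ k')]
    rw [Finset.sum_eq_single k]
    · simp
    · intro k' _ hk'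
      have : k'.1 ≠ k.1 := fun h => hk' (Fin.ext h)
      have h1 := k.isLt; have h2 := k'.isLt
      rw [if_neg (by omega)]
    · simp
  have hbase_coeff_m : base.coeff m = 1 := by
    rw [hbase, coeff_add, coeff_X_pow, if_pos rfl, finset_sum_coeff]
    rw [Finset.sum_congr rfl (fun k' _ => hterm _ k')]
    have : ∀ k' : Fin w, (if m - (k'.1+1) = m then a k' else 0) = 0 := by
      intro k'
      rw [if_neg (by have := k'.isLt; omega)]
    rw [Finset.sum_congr rfl (fun k' _ => this k'), Finset.sum_const_zero, add_zero]
  have hbase_deg : base.natDegree ≤ m := by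
    refine le_trans (natDegree_add_le _ _) (max_le (by simp) ?_)
    refine natDegree_sum_le_of_forall_le _ _ (fun k' _ => ?_)
    refine le_trans (natDegree_C_mul_le _ _) (le_trans (natDegree_X_pow_le _) (by omega))
  -- inner condition
  have hinner : ∀ g : Polynomial F,
      Nat.card {h : Polynomial F // h.Monic ∧ Irreducible h ∧ h.natDegree = i ∧ h ∣ g}
      = (Finset.univ.filter fun h : ιT => ψ g h = 0).card := by
    intro g
    have e : {h : Polynomial F // h.Monic ∧ Irreducible h ∧ h.natDegree = i ∧ h ∣ g}
        ≃ {h : ιT // ψ g h = 0} :=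
      { toFun := fun h => ⟨⟨h.1, h.2.1, h.2.2.1, h.2.2.2.1⟩, (hψ_zero g _).2 h.2.2.2.2⟩
        invFun := fun h => ⟨h.1.1, h.1.2.1, h.1.2.2.1, h.1.2.2.2, (hψ_zero g _).1 h.2⟩
        left_inv := fun h => rfl
        right_inv := fun h => rfl }
    rw [Nat.card_congr e, Nat.card_eq_fintype_card, Fintype.card_subtype]
  -- V = degreeLT F n
  set V := Polynomial.degreeLT F n with hV
  haveI : Fintype V := Fintype.ofEquiv _ (Polynomial.degreeLTEquiv F n).toEquiv.symm
  have hVcard : Fintype.card V = q ^ n := by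
    rw [Fintype.card_congr (Polynomial.degreeLTEquiv F n).toEquiv]
    simp [hF]
  -- properties of base + c
  have hprops : ∀ c : V, (base + c.1).Monic ∧ (base + c.1).natDegree = m ∧
      ∀ k : Fin w, (base + c.1).coeff (m - (k.1 + 1)) = a k := by
    intro c
    have hcdeg : c.1.degree < (n : ℕ) := Polynomial.mem_degreeLT.mp c.2
    have hczero : ∀ j : ℕ, n ≤ j → c.1.coeff j = 0 :=
      (Polynomial.degree_lt_iff_coeff_zero _ _).mp hcdeg
    have hcnat : c.1.natDegree ≤ m := by
      rcases eq_or_ne c.1 0 with h0 | h0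
      · simp [h0]
      · have := Polynomial.natDegree_lt_iff_degree_lt h0 |>.mpr hcdeg
        omega
    have hco : (base + c.1).coeff m = 1 := by
      rw [coeff_add, hbase_coeff_m, hczero m (by omega), add_zero]
    have hnatle : (base + c.1).natDegree ≤ m :=
      le_trans (natDegree_add_le _ _) (max_le hbase_deg hcnat)
    refine ⟨monic_of_natDegree_le_of_coeff_eq_one m hnatle hco,
      le_antisymm hnatle (le_natDegree_of_ne_zero (by rw [hco]; exact one_ne_zero)), ?_⟩
    intro k
    rw [coeff_add, hbase_coeff k, hczero _ (by have := k.isLt; omega), add_zero]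
  have hmem_sub : ∀ g : Polynomial F, g.Monic → g.natDegree = m →
      (∀ k : Fin w, g.coeff (m - (k.1 + 1)) = a k) → g - base ∈ Polynomial.degreeLT F n := by
    intro g hg1 hg2 hg3
    rw [Polynomial.mem_degreeLT]
    rw [Polynomial.degree_lt_iff_coeff_zero]
    intro j hj
    rw [coeff_sub]
    rcases lt_trichotomy j m with hjm | rfl | hjm
    · -- n ≤ j < m
      have hk : m - j - 1 < w := by omega
      have hidx : m - ((m - j - 1) + 1) = j := by omega
      have h1 := hg3 ⟨m - j - 1, hk⟩
      have h2 := hbase_coeff ⟨m - j - 1, hk⟩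
      simp only [hidx] at h1 h2
      rw [h1, h2, sub_self]
    · rw [hbase_coeff_m, ← hg2, hg1.coeff_natDegree, sub_self]
    · rw [coeff_eq_zero_of_natDegree_lt (by omega), coeff_eq_zero_of_natDegree_lt (by omega),
        sub_self]
  -- main bijection
  have e : {g : Polynomial F // g.Monic ∧ g.natDegree = m ∧
        (∀ k : Fin w, g.coeff (m - (k + 1)) = a k) ∧
        Nat.card {h : Polynomial F // h.Monic ∧ Irreducible h ∧ h.natDegree = i ∧ h ∣ g} = r}
      ≃ {c : V // (Finset.univ.filter fun h : ιT => ψ (base + c.1) h = 0).card = r} :=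
    { toFun := fun g => ⟨⟨g.1 - base, hmem_sub g.1 g.2.1 g.2.2.1 g.2.2.2.1⟩, by
        have h5 := g.2.2.2.2
        rw [hinner] at h5
        rw [show base + (g.1 - base) = g.1 by ring]
        exact h5⟩
      invFun := fun c => ⟨base + c.1.1, (hprops c.1).1, (hprops c.1).2.1, (hprops c.1).2.2, by
        rw [hinner]; exact c.2⟩
      left_inv := fun g => Subtype.ext (by simp)
      right_inv := fun c => Subtype.ext (Subtype.ext (by simp)) }
  rw [Nat.card_congr e, Nat.card_eq_fintype_card, Fintype.card_subtype]
  -- fiber counting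
  have hK0 : ∀ y : ∀ h : ιT, Q h,
      (univ.filter fun c : V => ψ c.1 = y).card = (univ.filter fun c : V => ψ c.1 = 0).card := by
    intro y
    obtain ⟨p, hpV, hpy⟩ := hsurj y
    set c0 : V := ⟨p, hpV⟩ with hc0
    refine Finset.card_bij' (fun c _ => c - c0) (fun d _ => d + c0) ?_ ?_ ?_ ?_
    · intro c hc
      rw [mem_filter] at hc ⊢
      refine ⟨mem_univ _, ?_⟩
      have : (c - c0).1 = c.1 - p := rfl
      rw [this, hψ_sub, hc.2, hpy, sub_self]
    · intro d hd
      rw [mem_filter] at hd ⊢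
      refine ⟨mem_univ _, ?_⟩
      have : (d + c0).1 = d.1 + p := rfl
      rw [this, hψ_add, hd.2, hpy, zero_add]
    · intro c _; exact sub_add_cancel c c0
    · intro d _; exact add_sub_cancel_right d c0
  have hPi : Fintype.card (∀ h : ιT, Q h) = q ^ (i * Ni) := by
    rw [Fintype.card_pi, Finset.prod_congr rfl (fun h _ => hQcard h), Finset.prod_const,
      card_univ, hcard_ι, ← pow_mul]
  have hK0val : (univ.filter fun c : V => ψ c.1 = 0).card = q ^ (n - i * Ni) := by
    have h1 : (univ : Finset V).card
        = ∑ y : ∀ h : ιT, Q h, (univ.filter fun c : V => ψ c.1 = y).card :=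
      Finset.card_eq_sum_card_fiberwise (fun c _ => mem_univ _)
    rw [card_univ, hVcard] at h1
    rw [Finset.sum_congr rfl (fun y _ => hK0 y), Finset.sum_const, card_univ, hPi,
      smul_eq_mul] at h1
    have h2 : q ^ n = q ^ (i * Ni) * q ^ (n - i * Ni) := by
      rw [← pow_add]; congr 1; omega
    have hpos : 0 < q ^ (i * Ni) := pow_pos (by omega) _
    exact Nat.eq_of_mul_eq_mul_left hpos (h1.symm.trans h2)
  -- count via Zr
  set Zr : Finset (∀ h : ιT, Q h) :=
    univ.filter fun y => (univ.filter fun h : ιT => y h = 0).card = r with hZr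
  have hstep : (univ.filter fun c : V =>
        (Finset.univ.filter fun h : ιT => ψ (base + c.1) h = 0).card = r)
      = univ.filter (fun c : V => ψ (base + c.1) ∈ Zr) := by
    ext c
    simp [hZr]
  rw [hstep]
  have hfiber_eq : ∀ y : ∀ h : ιT, Q h,
      (univ.filter fun c : V => ψ (base + c.1) = y).card = q ^ (n - i * Ni) := by
    intro y
    have : (univ.filter fun c : V => ψ (base + c.1) = y)
        = (univ.filter fun c : V => ψ c.1 = y - ψ base) := by
      ext c
      simp only [mem_filter, mem_univ, true_and]
      rw [hψ_add]
      constructor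
      · intro h; rw [← h]; abel
      · intro h; rw [h]; abel
    rw [this, hK0, hK0val]
  have hmain : (univ.filter (fun c : V => ψ (base + c.1) ∈ Zr)).card
      = Zr.card * q ^ (n - i * Ni) := by
    rw [Finset.card_eq_sum_card_fiberwise
      (s := univ.filter (fun c : V => ψ (base + c.1) ∈ Zr))
      (f := fun c : V => ψ (base + c.1)) (t := Zr)
      (fun c hc => (mem_filter.mp hc).2)]
    have : ∀ y ∈ Zr, ((univ.filter (fun c : V => ψ (base + c.1) ∈ Zr)).filter
        (fun c => ψ (base + c.1) = y)).card = q ^ (n - i * Ni) := by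
      intro y hy
      rw [Finset.filter_filter]
      have : (univ.filter fun c : V => ψ (base + c.1) ∈ Zr ∧ ψ (base + c.1) = y)
          = univ.filter fun c : V => ψ (base + c.1) = y := by
        ext c
        simp only [mem_filter, mem_univ, true_and]
        constructor
        · exact fun h => h.2
        · exact fun h => ⟨h ▸ hy, h⟩
      rw [this, hfiber_eq]
    rw [Finset.sum_congr rfl this, Finset.sum_const, smul_eq_mul]
  rw [hmain]
  have hZrcard : Zr.card = Ni.choose r * (q ^ i - 1) ^ (Ni - r) := by
    rw [hZr]
    rw [count_exact_zeros Q (q ^ i) hQcard r, hcard_ι]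
  rw [hZrcard]
  -- final arithmetic
  have hq0 : (q : ℚ) ≠ 0 := Nat.cast_ne_zero.mpr (by omega)
  rcases le_or_gt r Ni with hr | hr
  · have h1 : (1:ℕ) ≤ q ^ i := Nat.one_le_pow _ _ (by omega)
    push_cast [Nat.cast_sub h1]
    have hqi : (q:ℚ)^i ≠ 0 := pow_ne_zero _ hq0
    have e2 : (1 : ℚ) - 1/(q:ℚ)^i = ((q:ℚ)^i - 1)/(q:ℚ)^i := by field_simp
    have e3 : (q:ℚ)^(m-w) = q^(n - i*Ni) * ((q:ℚ)^i)^r * ((q:ℚ)^i)^(Ni-r) := by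
      rw [← pow_mul, ← pow_mul, ← pow_add, ← pow_add]
      congr 1
      have : i * r + i * (Ni - r) = i * Ni := by
        rw [← Nat.mul_add]
        congr 1
        omega
      omega
    rw [e2, e3]
    generalize (q:ℚ)^i = X at *
    field_simp
    rw [div_pow, div_pow, one_pow, div_eq_mul_inv, one_mul, div_eq_mul_inv]
    have hA := mul_inv_cancel₀ (pow_ne_zero r hqi)
    have hB := mul_inv_cancel₀ (pow_ne_zero (Ni - r) hqi)
    linear_combination (-((Ni.choose r : ℚ) * (X - 1) ^ (Ni - r) * X ^ (Ni - r) * (X ^ (Ni - r))⁻¹)) * hA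
      - ((Ni.choose r : ℚ) * (X - 1) ^ (Ni - r)) * hB
  · rw [Nat.choose_eq_zero_of_lt hr]
    simp
end

section
/- Let i ≥ 1, l ≥ 0, and let N_i be the number of monic irreducible polynomials of degree i over F_q. If m ≥ i(N_i + l) + w and a_1, ..., a_w ∈ F_q are fixed, then the number of monic polynomials x^m + a_1 x^{m-1} + ... + a_w x^{m-w} + g(x), deg g ≤ m−w−1, having exactly l irreducible factors of degree i counted with multiplicity, equals q^{m-w} · C(N_i + l − 1, l) · (1/q^i)^l · (1 − 1/q^i)^{N_i}. -/
open Polynomial UniqueFactorizationMonoid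

namespace Stmt12
set_option linter.unusedSectionVars false
set_option linter.unusedVariables false
set_option maxHeartbeats 1000000

variable {F : Type*} [Field F] [Fintype F] [DecidableEq F]

theorem finite_subtype_of_natDegree_le (n : ℕ) (P : Polynomial F → Prop)
    (hP : ∀ g, P g → g.natDegree ≤ n) : Finite {g : Polynomial F // P g} := by
  apply Finite.of_injective
    (fun g : {g : Polynomial F // P g} => (fun j : Fin (n+1) => g.1.coeff j))
  intro g g' h
  apply Subtype.ext; apply Polynomial.ext; intro t
  by_cases ht : t ≤ n
  · exact congrFun h ⟨t, by omega⟩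
  · rw [Polynomial.coeff_eq_zero_of_natDegree_lt (lt_of_le_of_lt (hP _ g.2) (by omega)),
      Polynomial.coeff_eq_zero_of_natDegree_lt (lt_of_le_of_lt (hP _ g'.2) (by omega))]

theorem coeff_aux (N : ℕ) (v : ℕ → F) (k : ℕ) :
    (∑ t ∈ Finset.range N, C (v t) * X ^ t).coeff k = if k < N then v k else 0 := by
  rw [Polynomial.finset_sum_coeff]
  simp only [Polynomial.coeff_C_mul, Polynomial.coeff_X_pow, mul_ite, mul_one, mul_zero]
  rw [Finset.sum_ite_eq (Finset.range N) k v]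
  simp [Finset.mem_range]

theorem degree_aux (N : ℕ) (v : ℕ → F) :
    (∑ t ∈ Finset.range N, C (v t) * X ^ t).degree < (N : WithBot ℕ) := by
  apply lt_of_le_of_lt (Polynomial.degree_sum_le _ _)
  rw [Finset.sup_lt_iff (by exact_mod_cast WithBot.bot_lt_coe N)]
  intro t ht
  exact lt_of_le_of_lt (Polynomial.degree_C_mul_X_pow_le _ _)
    (by exact_mod_cast Finset.mem_range.mp ht)

theorem monic_aux (N : ℕ) (v : ℕ → F) :
    (X ^ N + ∑ t ∈ Finset.range N, C (v t) * X ^ t).Monic :=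
  Polynomial.monic_X_pow_add (degree_aux N v)

theorem natDegree_aux (N : ℕ) (v : ℕ → F) :
    (X ^ N + ∑ t ∈ Finset.range N, C (v t) * X ^ t).natDegree = N := by
  apply Polynomial.natDegree_eq_of_degree_eq_some
  rw [Polynomial.degree_add_eq_left_of_degree_lt, Polynomial.degree_X_pow]
  rw [Polynomial.degree_X_pow]; exact degree_aux N v

theorem card_monic (N : ℕ) :
    Nat.card {s : Polynomial F // s.Monic ∧ s.natDegree = N} = Fintype.card F ^ N := by
  classical
  have e : {s : Polynomial F // s.Monic ∧ s.natDegree = N} ≃ (Fin N → F) := {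
    toFun := fun s j => s.1.coeff j
    invFun := fun c => ⟨X ^ N + ∑ t ∈ Finset.range N, C (if h : t < N then c ⟨t, h⟩ else 0) * X ^ t,
      monic_aux N _, natDegree_aux N _⟩
    left_inv := by
      rintro ⟨s, hs1, hs2⟩
      apply Subtype.ext; apply Polynomial.ext; intro t
      rw [Polynomial.coeff_add, coeff_aux, Polynomial.coeff_X_pow]
      rcases lt_trichotomy t N with h | h | h
      · simp [h, Nat.ne_of_lt h]
      · subst h; simp [← hs2, hs1.coeff_natDegree]
      · simp only [if_neg (Nat.ne_of_gt h).symm, if_neg (by omega : ¬ t < N), add_zero,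
          if_neg (by omega : ¬ t = N)]
        exact (Polynomial.coeff_eq_zero_of_natDegree_lt (by omega)).symm
    right_inv := by
      intro c; funext j
      simp only [Polynomial.coeff_add, coeff_aux, Polynomial.coeff_X_pow]
      simp [j.isLt, Nat.ne_of_lt j.isLt] }
  rw [Nat.card_congr e]
  simp [Nat.card_eq_fintype_card]

theorem card_dvd_top (d : Polynomial F) (hd : d.Monic) :
    ∀ (w : ℕ) (n : ℕ), d.natDegree + w ≤ n → ∀ b : Fin w → F,
    Nat.card {g : Polynomial F // g.Monic ∧ g.natDegree = n ∧
        (∀ j : Fin w, g.coeff (n - (j + 1)) = b j) ∧ d ∣ g} =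
      Fintype.card F ^ (n - d.natDegree - w) := by
  have hq0 : (Fintype.card F : ℕ) ≠ 0 := Fintype.card_ne_zero
  intro w
  induction w with
  | zero =>
    intro n hn b
    have e : {s : Polynomial F // s.Monic ∧ s.natDegree = n - d.natDegree} ≃
        {g : Polynomial F // g.Monic ∧ g.natDegree = n ∧
          (∀ j : Fin 0, g.coeff (n - (j + 1)) = b j) ∧ d ∣ g} := by
      apply Equiv.ofBijective (fun s => ⟨d * s.1, hd.mul s.2.1,
        by rw [Polynomial.natDegree_mul hd.ne_zero s.2.1.ne_zero, s.2.2]; omega,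
        fun j => j.elim0, dvd_mul_right _ _⟩)
      constructor
      · intro s s' h
        have := congrArg Subtype.val h
        exact Subtype.ext (mul_left_cancel₀ hd.ne_zero this)
      · rintro ⟨g, hg1, hg2, _, s, rfl⟩
        have hs0 : s ≠ 0 := by rintro rfl; simp at hg1
        have hsm : s.Monic := by
          have := hg1
          unfold Polynomial.Monic at this ⊢
          rwa [Polynomial.leadingCoeff_mul, hd.leadingCoeff, one_mul] at this
        refine ⟨⟨s, hsm, ?_⟩, rfl⟩
        rw [Polynomial.natDegree_mul hd.ne_zero hs0] at hg2; omega
    rw [← Nat.card_congr e, card_monic, Nat.sub_zero]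
  | succ w ih =>
    intro n hn b
    have hn' : d.natDegree + w ≤ n := by omega
    set k := d.natDegree with hk
    set p : ℕ := n - (w + 1) - k with hp
    set b' : Fin w → F := fun j => b j.castSucc with hb'
    -- the main translation step
    have main : ∀ (t : F) (g : Polynomial F), (g.Monic ∧ g.natDegree = n ∧
          (∀ j : Fin w, g.coeff (n - (j + 1)) = b' j) ∧ d ∣ g) →
        (((g + C t * d * X ^ p).Monic ∧ (g + C t * d * X ^ p).natDegree = n ∧
          (∀ j : Fin w, (g + C t * d * X ^ p).coeff (n - (j + 1)) = b' j) ∧ d ∣ (g + C t * d * X ^ p))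
          ∧ (g + C t * d * X ^ p).coeff (n - (w + 1)) = g.coeff (n - (w + 1)) + t) := by
      rintro t g ⟨h1, h2, h3, h4⟩
      have hCd : (C t * d).natDegree ≤ k := by
        simpa [Polynomial.natDegree_C] using Polynomial.natDegree_mul_le (p := C t) (q := d)
      have h5 : (C t * d * X ^ p).natDegree ≤ n - (w + 1) := by
        refine le_trans Polynomial.natDegree_mul_le ?_
        rw [Polynomial.natDegree_X_pow]; omega
      have hdeg : (C t * d * X ^ p).degree < g.degree := by
        rw [Polynomial.degree_eq_natDegree h1.ne_zero, h2]
        apply lt_of_le_of_lt Polynomial.degree_le_natDegree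
        exact_mod_cast lt_of_le_of_lt h5 (by omega)
      have hcoe : ∀ u : ℕ, n - (w + 1) < u → (g + C t * d * X ^ p).coeff u = g.coeff u := by
        intro u hu
        rw [Polynomial.coeff_add,
          Polynomial.coeff_eq_zero_of_natDegree_lt (p := C t * d * X ^ p) (by omega), add_zero]
      have hct : (C t * d * X ^ p).coeff (n - (w + 1)) = t := by
        rw [mul_assoc, Polynomial.coeff_C_mul, Polynomial.coeff_mul_X_pow', if_pos (by omega)]
        have hnk : n - (w + 1) - p = k := by omega
        rw [hnk, hd.coeff_natDegree, mul_one]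
      refine ⟨⟨h1.add_of_left hdeg,
        (Polynomial.natDegree_eq_of_degree_eq (Polynomial.degree_add_eq_left_of_degree_lt hdeg)).trans h2,
        fun j => ?_, dvd_add h4 ⟨C t * X ^ p, by ring⟩⟩, ?_⟩
      · rw [hcoe _ (by have := j.isLt; omega)]; exact h3 j
      · rw [Polynomial.coeff_add, hct]
    -- translation equivalence between fibers
    have key : ∀ x y : F,
        Nat.card {g : Polynomial F // (g.Monic ∧ g.natDegree = n ∧
          (∀ j : Fin w, g.coeff (n - (j + 1)) = b' j) ∧ d ∣ g) ∧ g.coeff (n - (w + 1)) = x} =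
        Nat.card {g : Polynomial F // (g.Monic ∧ g.natDegree = n ∧
          (∀ j : Fin w, g.coeff (n - (j + 1)) = b' j) ∧ d ∣ g) ∧ g.coeff (n - (w + 1)) = y} := by
      intro x y
      have cancel : ∀ (u v : F) (g : Polynomial F),
          g + C u * d * X ^ p + C v * d * X ^ p = g + C (u + v) * d * X ^ p := by
        intro u v g; rw [C_add]; ring
      refine Nat.card_congr ⟨fun g => ⟨g.1 + C (y - x) * d * X ^ p, ?_⟩,
        fun g => ⟨g.1 + C (x - y) * d * X ^ p, ?_⟩, ?_, ?_⟩
      · obtain ⟨hP, hx⟩ := g.2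
        obtain ⟨hP', hc⟩ := main (y - x) g.1 hP
        exact ⟨hP', by rw [hc, hx]; ring⟩
      · obtain ⟨hP, hx⟩ := g.2
        obtain ⟨hP', hc⟩ := main (x - y) g.1 hP
        exact ⟨hP', by rw [hc, hx]; ring⟩
      · rintro ⟨g, hg⟩; apply Subtype.ext
        show g + C (y - x) * d * X ^ p + C (x - y) * d * X ^ p = g
        rw [cancel]; simp
      · rintro ⟨g, hg⟩; apply Subtype.ext
        show g + C (x - y) * d * X ^ p + C (y - x) * d * X ^ p = g
        rw [cancel]; simp
    -- fibering
    have hfin : ∀ x : F, Finite {g : Polynomial F // (g.Monic ∧ g.natDegree = n ∧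
          (∀ j : Fin w, g.coeff (n - (j + 1)) = b' j) ∧ d ∣ g) ∧ g.coeff (n - (w + 1)) = x} := by
      intro x
      exact finite_subtype_of_natDegree_le n _ (fun g hg => le_of_eq hg.1.2.1)
    have hfin2 : Finite {g : Polynomial F // g.Monic ∧ g.natDegree = n ∧
          (∀ j : Fin w, g.coeff (n - (j + 1)) = b' j) ∧ d ∣ g} :=
      finite_subtype_of_natDegree_le n _ (fun g hg => le_of_eq hg.2.1)
    have hsum : Nat.card {g : Polynomial F // g.Monic ∧ g.natDegree = n ∧
          (∀ j : Fin w, g.coeff (n - (j + 1)) = b' j) ∧ d ∣ g} =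
        ∑ x : F, Nat.card {g : Polynomial F // (g.Monic ∧ g.natDegree = n ∧
          (∀ j : Fin w, g.coeff (n - (j + 1)) = b' j) ∧ d ∣ g) ∧ g.coeff (n - (w + 1)) = x} := by
      classical
      letI := Fintype.ofFinite {g : Polynomial F // g.Monic ∧ g.natDegree = n ∧
          (∀ j : Fin w, g.coeff (n - (j + 1)) = b' j) ∧ d ∣ g}
      letI : ∀ x : F, Fintype {g : Polynomial F // (g.Monic ∧ g.natDegree = n ∧
          (∀ j : Fin w, g.coeff (n - (j + 1)) = b' j) ∧ d ∣ g) ∧ g.coeff (n - (w + 1)) = x} :=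
        fun x => @Fintype.ofFinite _ (hfin x)
      rw [Nat.card_eq_fintype_card]
      simp_rw [Nat.card_eq_fintype_card]
      rw [← Fintype.card_sigma]
      apply Fintype.card_congr
      exact ((Equiv.sigmaFiberEquiv
        (fun g : {g : Polynomial F // g.Monic ∧ g.natDegree = n ∧
          (∀ j : Fin w, g.coeff (n - (j + 1)) = b' j) ∧ d ∣ g} => g.1.coeff (n - (w + 1)))).symm.trans
        (Equiv.sigmaCongrRight fun x =>
          Equiv.subtypeSubtypeEquivSubtypeInter
            (fun g : Polynomial F => g.Monic ∧ g.natDegree = n ∧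
              (∀ j : Fin w, g.coeff (n - (j + 1)) = b' j) ∧ d ∣ g)
            (fun g => g.coeff (n - (w + 1)) = x)))
    rw [ih n hn' b'] at hsum
    have hconst : ∀ x : F, Nat.card {g : Polynomial F // (g.Monic ∧ g.natDegree = n ∧
          (∀ j : Fin w, g.coeff (n - (j + 1)) = b' j) ∧ d ∣ g) ∧ g.coeff (n - (w + 1)) = x} =
        Nat.card {g : Polynomial F // (g.Monic ∧ g.natDegree = n ∧
          (∀ j : Fin w, g.coeff (n - (j + 1)) = b' j) ∧ d ∣ g) ∧
          g.coeff (n - (w + 1)) = b (Fin.last w)} := fun x => key x _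
    rw [Finset.sum_congr rfl (fun x _ => hconst x), Finset.sum_const, Finset.card_univ,
      smul_eq_mul] at hsum
    -- identify target with fiber at b (Fin.last w)
    have e1 : {g : Polynomial F // g.Monic ∧ g.natDegree = n ∧
        (∀ j : Fin (w + 1), g.coeff (n - (j + 1)) = b j) ∧ d ∣ g} ≃
        {g : Polynomial F // (g.Monic ∧ g.natDegree = n ∧
          (∀ j : Fin w, g.coeff (n - (j + 1)) = b' j) ∧ d ∣ g) ∧
          g.coeff (n - (w + 1)) = b (Fin.last w)} := by
      apply Equiv.subtypeEquivRight
      intro g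
      constructor
      · rintro ⟨h1, h2, h3, h4⟩
        exact ⟨⟨h1, h2, fun j => by simpa using h3 j.castSucc, h4⟩,
          by simpa using h3 (Fin.last w)⟩
      · rintro ⟨⟨h1, h2, h3, h4⟩, h5⟩
        refine ⟨h1, h2, fun j => ?_, h4⟩
        refine Fin.lastCases ?_ ?_ j
        · simpa using h5
        · intro j'; simpa using h3 j'
    rw [Nat.card_congr e1]
    have harith : Fintype.card F ^ (n - k - w) =
        Fintype.card F * Fintype.card F ^ (n - k - (w + 1)) := by
      have : n - k - w = (n - k - (w + 1)) + 1 := by omega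
      rw [this, pow_succ]; ring
    rw [harith] at hsum
    exact Nat.eq_of_mul_eq_mul_left (by omega) hsum.symm

theorem count_eq_iff (g : Polynomial F) (hg : g ≠ 0) (h : Polynomial F) (hmon : h.Monic)
    (hirr : Irreducible h) (c : ℕ) :
    (normalizedFactors g).count h = c ↔ h ^ c ∣ g ∧ ¬ h ^ (c + 1) ∣ g := by
  have hEq := emultiplicity_eq_count_normalizedFactors hirr hg
  rw [hmon.normalize_eq_self] at hEq
  rw [← emultiplicity_eq_coe, hEq]
  exact Nat.cast_inj.symm

theorem coprime_pow_of_ne (h1 h2 : Polynomial F) (hm1 : h1.Monic) (hm2 : h2.Monic)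
    (hi1 : Irreducible h1) (hi2 : Irreducible h2) (hne : h1 ≠ h2) (c1 c2 : ℕ) :
    IsCoprime (h1 ^ c1) (h2 ^ c2) := by
  apply IsCoprime.pow
  rw [hi1.coprime_iff_not_dvd]
  intro hdvd
  exact hne (Polynomial.eq_of_monic_of_associated hm1 hm2 (hi1.associated_of_dvd hi2 hdvd))

theorem card_subtype_filter {α : Type*} (s : Finset α) (P Q : α → Prop) [DecidablePred Q]
    (h : ∀ x, P x ↔ x ∈ s) : Nat.card {x // P x ∧ Q x} = (s.filter Q).card := by
  rw [← Fintype.card_coe (s.filter Q), ← Nat.card_eq_fintype_card]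
  apply Nat.card_congr
  exact Equiv.subtypeEquiv (Equiv.refl α) (by intro a; simp [h a, Finset.mem_filter])

theorem fiber_card (i m w l : ℕ)
    [Fintype {h : Polynomial F // h.Monic ∧ Irreducible h ∧ h.natDegree = i}]
    (a : Fin w → F)
    (e : {h : Polynomial F // h.Monic ∧ Irreducible h ∧ h.natDegree = i} → ℕ)
    (hsum : ∑ h, e h = l)
    (hm : i * (Fintype.card {h : Polynomial F // h.Monic ∧ Irreducible h ∧ h.natDegree = i} + l)
      + w ≤ m)
    (𝒜 : Finset (Polynomial F))
    (h𝒜 : ∀ g, (g.Monic ∧ g.natDegree = m ∧ (∀ k : Fin w, g.coeff (m - (k + 1)) = a k)) ↔ g ∈ 𝒜) :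
    ((𝒜.filter (fun g => ∀ h : {h : Polynomial F // h.Monic ∧ Irreducible h ∧ h.natDegree = i},
        (normalizedFactors g).count h.1 = e h)).card : ℚ) =
      (Fintype.card F : ℚ) ^ (m - w - i * l) *
        (1 - ((Fintype.card F : ℚ) ^ i)⁻¹) ^
          (Fintype.card {h : Polynomial F // h.Monic ∧ Irreducible h ∧ h.natDegree = i}) := by
  classical
  have hq0 : (Fintype.card F : ℚ) ≠ 0 := by exact_mod_cast Fintype.card_ne_zero
  set Hc := Fintype.card {h : Polynomial F // h.Monic ∧ Irreducible h ∧ h.natDegree = i} with hHc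
  -- the divisor polynomials
  set D : Finset {h : Polynomial F // h.Monic ∧ Irreducible h ∧ h.natDegree = i} → Polynomial F :=
    fun S => ∏ h, h.1 ^ (e h + if h ∈ S then 1 else 0) with hD
  have hDmon : ∀ S, (D S).Monic := fun S =>
    Polynomial.monic_prod_of_monic _ _ (fun h _ => h.2.1.pow _)
  have hDdeg : ∀ S, (D S).natDegree = i * l + i * S.card := by
    intro S
    rw [hD]
    rw [Polynomial.natDegree_prod _ _ (fun h _ => pow_ne_zero _ h.2.1.ne_zero)]
    simp only [Polynomial.natDegree_pow]
    have step : ∀ h : {h : Polynomial F // h.Monic ∧ Irreducible h ∧ h.natDegree = i},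
        h ∈ Finset.univ → (e h + if h ∈ S then 1 else 0) * h.1.natDegree =
          e h * i + (if h ∈ S then i else 0) := by
      intro h _; rw [h.2.2.2]; split <;> ring
    rw [Finset.sum_congr rfl step, Finset.sum_add_distrib, ← Finset.sum_mul, hsum,
      Finset.sum_ite_mem, Finset.univ_inter, Finset.sum_const, smul_eq_mul]
    ring
  have hDdvd : ∀ S (g : Polynomial F), D S ∣ g ↔
      ∀ h : {h : Polynomial F // h.Monic ∧ Irreducible h ∧ h.natDegree = i},
        h.1 ^ (e h + if h ∈ S then 1 else 0) ∣ g := by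
    intro S g
    constructor
    · intro hdvd h
      exact dvd_trans (Finset.dvd_prod_of_mem
        (fun h => h.1 ^ (e h + if h ∈ S then 1 else 0)) (Finset.mem_univ h)) hdvd
    · intro hall
      apply Finset.prod_dvd_of_coprime _ (fun h _ => hall h)
      intro h1 _ h2 _ hne
      exact coprime_pow_of_ne h1.1 h2.1 h1.2.1 h2.2.1 h1.2.2.1 h2.2.2.1
        (fun hv => hne (Subtype.ext hv)) _ _
  -- card of divisibility sets
  have hcards : ∀ S : Finset {h : Polynomial F // h.Monic ∧ Irreducible h ∧ h.natDegree = i},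
      ((𝒜.filter (fun g => D S ∣ g)).card : ℚ) =
        (Fintype.card F : ℚ) ^ (m - (i * l + i * S.card) - w) := by
    intro S
    have hc1 : i * l + i * S.card + w ≤ m := by
      have h1 : S.card ≤ Hc := by rw [hHc]; exact Finset.card_le_univ S
      have h2 : i * l + i * S.card ≤ i * (Hc + l) := by
        have := Nat.mul_le_mul_left i (Nat.add_le_add_right h1 l)
        calc i * l + i * S.card = i * (S.card + l) := by ring
        _ ≤ i * (Hc + l) := this
      omega
    rw [← card_subtype_filter 𝒜 _ _ h𝒜]
    have := card_dvd_top (D S) (hDmon S) w m (by rw [hDdeg S]; omega) a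
    rw [hDdeg S] at this
    have h2 : Nat.card {x : Polynomial F // (x.Monic ∧ x.natDegree = m ∧
        ∀ k : Fin w, x.coeff (m - (k + 1)) = a k) ∧ D S ∣ x} =
        Fintype.card F ^ (m - (i * l + i * S.card) - w) := by
      rw [← this]
      exact Nat.card_congr (Equiv.subtypeEquivRight (fun g => by tauto))
    exact_mod_cast h2
  -- the base set
  set B : Finset (Polynomial F) := 𝒜.filter (fun g => D ∅ ∣ g) with hB
  -- rewriting the filter
  have hfilter : 𝒜.filter (fun g => ∀ h : {h : Polynomial F // h.Monic ∧ Irreducible h ∧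
        h.natDegree = i}, (normalizedFactors g).count h.1 = e h) =
      B.filter (fun g => ∀ h : {h : Polynomial F // h.Monic ∧ Irreducible h ∧ h.natDegree = i},
        ¬ h.1 ^ (e h + 1) ∣ g) := by
    rw [hB, Finset.filter_filter]
    apply Finset.filter_congr
    intro g hg
    have hg0 : g ≠ 0 := (((h𝒜 g).mpr hg).1).ne_zero
    simp only [hDdvd ∅ g]
    constructor
    · intro hc
      constructor
      · intro h
        simp only [Finset.notMem_empty, if_false, add_zero]
        exact ((count_eq_iff g hg0 h.1 h.2.1 h.2.2.1 (e h)).mp (hc h)).1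
      · intro h
        exact ((count_eq_iff g hg0 h.1 h.2.1 h.2.2.1 (e h)).mp (hc h)).2
    · rintro ⟨hc1, hc2⟩ h
      refine (count_eq_iff g hg0 h.1 h.2.1 h.2.2.1 (e h)).mpr ⟨?_, hc2 h⟩
      have := hc1 h
      simpa using this
  rw [hfilter]
  -- inclusion-exclusion
  have hIE : ((B.filter (fun g => ∀ h : {h : Polynomial F // h.Monic ∧ Irreducible h ∧
        h.natDegree = i}, ¬ h.1 ^ (e h + 1) ∣ g)).card : ℚ) =
      ∑ S ∈ (Finset.univ : Finset {h : Polynomial F // h.Monic ∧ Irreducible h ∧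
          h.natDegree = i}).powerset,
        (-1 : ℚ) ^ S.card * ((𝒜.filter (fun g => D S ∣ g)).card : ℚ) := by
    rw [← Finset.sum_boole]
    have hpt : ∀ g ∈ B, (if (∀ h : {h : Polynomial F // h.Monic ∧ Irreducible h ∧
          h.natDegree = i}, ¬ h.1 ^ (e h + 1) ∣ g) then (1 : ℚ) else 0) =
        ∑ S ∈ (Finset.univ : Finset {h : Polynomial F // h.Monic ∧ Irreducible h ∧
            h.natDegree = i}).powerset,
          (-1 : ℚ) ^ S.card * (if ∀ h ∈ S, h.1 ^ (e h + 1) ∣ g then (1 : ℚ) else 0) := by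
      intro g hg
      have expand : (if (∀ h : {h : Polynomial F // h.Monic ∧ Irreducible h ∧
            h.natDegree = i}, ¬ h.1 ^ (e h + 1) ∣ g) then (1 : ℚ) else 0) =
          ∏ h : {h : Polynomial F // h.Monic ∧ Irreducible h ∧ h.natDegree = i},
            ((fun h => -(if h.1 ^ (e h + 1) ∣ g then (1 : ℚ) else 0)) h + 1) := by
        by_cases hall : ∀ h : {h : Polynomial F // h.Monic ∧ Irreducible h ∧
            h.natDegree = i}, ¬ h.1 ^ (e h + 1) ∣ g
        · rw [if_pos hall, Finset.prod_eq_one]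
          intro h _; simp [hall h]
        · rw [if_neg hall]
          push_neg at hall
          obtain ⟨h0, hh0⟩ := hall
          rw [eq_comm]
          apply Finset.prod_eq_zero (Finset.mem_univ h0)
          simp [hh0]
      rw [expand, Finset.prod_add]
      apply Finset.sum_congr rfl
      intro S _
      rw [Finset.prod_const, one_pow, mul_one]
      have : ∀ h ∈ S, -(if h.1 ^ (e h + 1) ∣ g then (1 : ℚ) else 0) =
          (-1) * (if h.1 ^ (e h + 1) ∣ g then (1 : ℚ) else 0) := by intro h _; ring
      rw [Finset.prod_congr rfl this, Finset.prod_mul_distrib, Finset.prod_const,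
        Finset.prod_boole]
      simp
    rw [Finset.sum_congr rfl hpt, Finset.sum_comm]
    apply Finset.sum_congr rfl
    intro S hS
    rw [← Finset.mul_sum, Finset.sum_boole]
    congr 2
    -- B.filter (∀ h ∈ S, dvd) = 𝒜.filter (D S ∣ ·)
    rw [hB, Finset.filter_filter]
    congr 1
    apply Finset.filter_congr
    intro g hg
    simp only [hDdvd ∅ g, hDdvd S g]
    constructor
    · rintro ⟨hc1, hc2⟩ h
      by_cases hhS : h ∈ S
      · rw [if_pos hhS]; exact hc2 h hhS
      · rw [if_neg hhS, add_zero]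
        have := hc1 h
        simpa using this
    · intro hc
      constructor
      · intro h
        simp only [Finset.notMem_empty, if_false, add_zero]
        refine dvd_trans (pow_dvd_pow _ ?_) (hc h)
        omega
      · intro h hhS
        have := hc h
        rwa [if_pos hhS] at this
  rw [hIE]
  -- evaluate the sum
  have heval : ∀ S ∈ (Finset.univ : Finset {h : Polynomial F // h.Monic ∧ Irreducible h ∧
      h.natDegree = i}).powerset,
      (-1 : ℚ) ^ S.card * ((𝒜.filter (fun g => D S ∣ g)).card : ℚ) =
      (Fintype.card F : ℚ) ^ (m - w - i * l) * (-((Fintype.card F : ℚ) ^ i)⁻¹) ^ S.card := by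
    intro S _
    rw [hcards S]
    have h1 : S.card ≤ Hc := by rw [hHc]; exact Finset.card_le_univ S
    have hc1 : i * l + i * S.card + w ≤ m := by
      have h2 : i * l + i * S.card ≤ i * (Hc + l) := by
        have := Nat.mul_le_mul_left i (Nat.add_le_add_right h1 l)
        calc i * l + i * S.card = i * (S.card + l) := by ring
        _ ≤ i * (Hc + l) := this
      omega
    have key : (Fintype.card F : ℚ) ^ (m - (i * l + i * S.card) - w) *
        ((Fintype.card F : ℚ) ^ i) ^ S.card = (Fintype.card F : ℚ) ^ (m - w - i * l) := by
      rw [← pow_mul, ← pow_add]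
      congr 1
      omega
    have hpow : (Fintype.card F : ℚ) ^ (m - (i * l + i * S.card) - w) =
        (Fintype.card F : ℚ) ^ (m - w - i * l) * (((Fintype.card F : ℚ) ^ i)⁻¹) ^ S.card := by
      rw [← key]
      field_simp
      rw [← mul_pow, mul_one_div_cancel (pow_ne_zero _ hq0), one_pow]
    rw [hpow]
    rw [neg_pow, inv_pow]
    ring
  rw [Finset.sum_congr rfl heval, ← Finset.mul_sum]
  congr 1
  -- ∑_{S ⊆ univ} r^|S| = (1 + r)^Hc
  have hbinom : ∀ r : ℚ, ∑ S ∈ (Finset.univ : Finset {h : Polynomial F // h.Monic ∧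
      Irreducible h ∧ h.natDegree = i}).powerset, r ^ S.card = (r + 1) ^ Hc := by
    intro r
    have := Finset.prod_add (fun _ => r) (fun _ => (1 : ℚ))
      (Finset.univ : Finset {h : Polynomial F // h.Monic ∧ Irreducible h ∧ h.natDegree = i})
    rw [Finset.prod_const, Finset.card_univ, ← hHc] at this
    rw [this]
    apply Finset.sum_congr rfl
    intro S _
    rw [Finset.prod_const, Finset.prod_const, one_pow, mul_one]
  rw [hbinom]
  ring

end Stmt12

open Stmt12

/-- If `m ≥ i(N_i + l) + w`, the number of monic polynomials
`x^m + a_1 x^(m-1) + ... + a_w x^(m-w) + g(x)` (with `deg g ≤ m-w-1`) having exactly `l`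
irreducible factors of degree `i` counted with multiplicity equals
`q^(m-w) · C(N_i + l − 1, l) · (1/q^i)^l · (1 − 1/q^i)^(N_i)`. -/
theorem stmt_12 (q : ℕ) (F : Type*) [Field F] [Fintype F] [DecidableEq F] (hF : Fintype.card F = q)
    (i : ℕ) (hi : 1 ≤ i) (Ni : ℕ)
    (hNi : Ni = Nat.card {h : Polynomial F // h.Monic ∧ Irreducible h ∧ h.natDegree = i})
    (w m l : ℕ) (hm : i * (Ni + l) + w ≤ m) (a : Fin w → F) :
    (Nat.card {g : Polynomial F // g.Monic ∧ g.natDegree = m ∧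
        (∀ k : Fin w, g.coeff (m - (k + 1)) = a k) ∧
        Multiset.countP (fun h => h.natDegree = i) (normalizedFactors g) = l} : ℚ) =
      (q : ℚ) ^ (m - w) * ((Ni + l - 1).choose l) * (1 / (q : ℚ) ^ i) ^ l *
        (1 - 1 / (q : ℚ) ^ i) ^ Ni := by
  classical
  subst hF
  have hq0 : (Fintype.card F : ℚ) ≠ 0 := by exact_mod_cast Fintype.card_ne_zero
  -- the type of monic irreducible degree-i polynomials
  have hfinH : Finite {h : Polynomial F // h.Monic ∧ Irreducible h ∧ h.natDegree = i} :=
    finite_subtype_of_natDegree_le i _ (fun h hh => le_of_eq hh.2.2)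
  letI : Fintype {h : Polynomial F // h.Monic ∧ Irreducible h ∧ h.natDegree = i} :=
    Fintype.ofFinite _
  have hNc : Ni = Fintype.card {h : Polynomial F // h.Monic ∧ Irreducible h ∧ h.natDegree = i} := by
    rw [hNi, Nat.card_eq_fintype_card]
  -- ambient finset
  have hfinP : Finite {g : Polynomial F // g.Monic ∧ g.natDegree = m ∧
      (∀ k : Fin w, g.coeff (m - (k + 1)) = a k)} :=
    finite_subtype_of_natDegree_le m _ (fun g hg => le_of_eq hg.2.1)
  have hsetfin : {g : Polynomial F | g.Monic ∧ g.natDegree = m ∧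
      (∀ k : Fin w, g.coeff (m - (k + 1)) = a k)}.Finite := @Set.toFinite _ _ hfinP
  set 𝒜 : Finset (Polynomial F) := hsetfin.toFinset with h𝒜def
  have h𝒜 : ∀ g : Polynomial F, (g.Monic ∧ g.natDegree = m ∧
      (∀ k : Fin w, g.coeff (m - (k + 1)) = a k)) ↔ g ∈ 𝒜 := by
    intro g; rw [h𝒜def, Set.Finite.mem_toFinset]; rfl
  -- convert LHS to a filter card
  have hLHS : Nat.card {g : Polynomial F // g.Monic ∧ g.natDegree = m ∧
      (∀ k : Fin w, g.coeff (m - (k + 1)) = a k) ∧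
      Multiset.countP (fun h => h.natDegree = i) (normalizedFactors g) = l} =
      (𝒜.filter (fun g =>
        Multiset.countP (fun h => h.natDegree = i) (normalizedFactors g) = l)).card := by
    rw [← card_subtype_filter 𝒜 (fun g => g.Monic ∧ g.natDegree = m ∧
      (∀ k : Fin w, g.coeff (m - (k + 1)) = a k)) _ h𝒜]
    exact Nat.card_congr (Equiv.subtypeEquivRight (fun g => by tauto))
  rw [hLHS]
  -- the multiset-of-degree-i-factors map
  have hmemf : ∀ (g x : Polynomial F), x ∈ (normalizedFactors g).filter
      (fun h => h.Monic ∧ Irreducible h ∧ h.natDegree = i) →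
      (x.Monic ∧ Irreducible x ∧ x.natDegree = i) :=
    fun g x hx => (Multiset.mem_filter.mp hx).2
  set f : Polynomial F → Multiset {h : Polynomial F // h.Monic ∧ Irreducible h ∧ h.natDegree = i} :=
    fun g => ((normalizedFactors g).filter
      (fun h => h.Monic ∧ Irreducible h ∧ h.natDegree = i)).attach.map
      (fun x => ⟨x.1, hmemf g x.1 x.2⟩) with hf
  have hfmap : ∀ g, (f g).map Subtype.val = (normalizedFactors g).filter
      (fun h => h.Monic ∧ Irreducible h ∧ h.natDegree = i) := by
    intro g
    rw [hf, Multiset.map_map]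
    exact Multiset.attach_map_val _
  have hfilter_eq : ∀ g : Polynomial F, (normalizedFactors g).filter
      (fun h => h.Monic ∧ Irreducible h ∧ h.natDegree = i) =
      (normalizedFactors g).filter (fun h => h.natDegree = i) := by
    intro g
    apply Multiset.filter_congr
    intro x hx
    have hirr := irreducible_of_normalized_factor x hx
    have hnorm := normalize_normalized_factor x hx
    have hmon : x.Monic := by
      have := Polynomial.monic_normalize (hirr.ne_zero)
      rwa [hnorm] at this
    constructor
    · exact fun h => h.2.2
    · exact fun h => ⟨hmon, hirr, h⟩
  have hcardf : ∀ g : Polynomial F, (f g).card =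
      Multiset.countP (fun h => h.natDegree = i) (normalizedFactors g) := by
    intro g
    have : (f g).card = ((f g).map Subtype.val).card := (Multiset.card_map _ _).symm
    rw [this, hfmap, hfilter_eq, Multiset.countP_eq_card_filter]
  -- the index finset
  set t : Finset (Multiset {h : Polynomial F // h.Monic ∧ Irreducible h ∧ h.natDegree = i}) :=
    Finset.image (fun v : Sym {h : Polynomial F // h.Monic ∧ Irreducible h ∧ h.natDegree = i} l =>
      (v : Multiset _)) Finset.univ with ht
  have htcard : t.card = (Ni + l - 1).choose l := by
    rw [ht, Finset.card_image_of_injective _ Sym.coe_injective, Finset.card_univ,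
      Sym.card_sym_eq_choose, hNc]
  have htmem : ∀ M, M ∈ t ↔ M.card = l := by
    intro M
    rw [ht]
    constructor
    · rintro hM
      obtain ⟨v, _, rfl⟩ := Finset.mem_image.mp hM
      exact v.2
    · intro hM
      exact Finset.mem_image.mpr ⟨⟨M, hM⟩, Finset.mem_univ _, rfl⟩
  -- partition
  have hpart : (𝒜.filter (fun g =>
      Multiset.countP (fun h => h.natDegree = i) (normalizedFactors g) = l)).card =
      ∑ M ∈ t, ((𝒜.filter (fun g =>
        Multiset.countP (fun h => h.natDegree = i) (normalizedFactors g) = l)).filter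
        (fun g => f g = M)).card := by
    apply Finset.card_eq_sum_card_fiberwise
    intro g hg
    rw [Finset.mem_coe, htmem, hcardf]
    exact (Finset.mem_filter.mp (Finset.mem_coe.mp hg)).2
  -- identify the fibers
  have hfib : ∀ M ∈ t, (𝒜.filter (fun g =>
      Multiset.countP (fun h => h.natDegree = i) (normalizedFactors g) = l)).filter
        (fun g => f g = M) =
      𝒜.filter (fun g => ∀ h : {h : Polynomial F // h.Monic ∧ Irreducible h ∧ h.natDegree = i},
        (normalizedFactors g).count h.1 = M.count h) := by
    intro M hM
    have hMcard : M.card = l := (htmem M).mp hM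
    rw [Finset.filter_filter]
    apply Finset.filter_congr
    intro g hg
    constructor
    · rintro ⟨hQ, hfg⟩ h
      have h1 : (normalizedFactors g).count h.1 =
          ((normalizedFactors g).filter
            (fun h => h.Monic ∧ Irreducible h ∧ h.natDegree = i)).count h.1 := by
        rw [Multiset.count_filter_of_pos (p := fun h : Polynomial F => h.Monic ∧ Irreducible h ∧ h.natDegree = i) h.2]
      rw [h1, ← hfmap, Multiset.count_map_eq_count' _ _ Subtype.val_injective, hfg]
    · intro hcount
      have hmapeq : (f g).map Subtype.val = M.map Subtype.val := by
        rw [hfmap]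
        apply Multiset.ext.mpr
        intro x
        by_cases hx : x.Monic ∧ Irreducible x ∧ x.natDegree = i
        · rw [Multiset.count_filter_of_pos (p := fun h : Polynomial F => h.Monic ∧ Irreducible h ∧ h.natDegree = i) hx]
          have := hcount ⟨x, hx⟩
          rw [this, ← Multiset.count_map_eq_count' _ _ Subtype.val_injective ⟨x, hx⟩]
        · rw [Multiset.count_filter_of_neg (p := fun h : Polynomial F => h.Monic ∧ Irreducible h ∧ h.natDegree = i) hx, eq_comm, Multiset.count_eq_zero]
          intro hmem
          obtain ⟨h', _, rfl⟩ := Multiset.mem_map.mp hmem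
          exact hx h'.2
      have hfgM : f g = M := Multiset.map_injective Subtype.val_injective hmapeq
      constructor
      · rw [← hcardf g, hfgM, hMcard]
      · exact hfgM
  -- apply the fiber count
  have hfibval : ∀ M ∈ t, ((𝒜.filter (fun g =>
      ∀ h : {h : Polynomial F // h.Monic ∧ Irreducible h ∧ h.natDegree = i},
        (normalizedFactors g).count h.1 = M.count h)).card : ℚ) =
      (Fintype.card F : ℚ) ^ (m - w - i * l) *
        (1 - ((Fintype.card F : ℚ) ^ i)⁻¹) ^
          (Fintype.card {h : Polynomial F // h.Monic ∧ Irreducible h ∧ h.natDegree = i}) := by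
    intro M hM
    have hMcard : M.card = l := (htmem M).mp hM
    apply fiber_card i m w l a (fun h => M.count h) _ (by rw [← hNc]; exact hm) 𝒜 h𝒜
    -- sum of counts = card
    have h1 : ∑ h ∈ M.toFinset, M.count h = M.card := Multiset.toFinset_sum_count_eq M
    rw [← hMcard, ← h1]
    refine (Finset.sum_subset (Finset.subset_univ M.toFinset) ?_).symm
    intro h _ hnot
    exact Multiset.count_eq_zero.mpr (by simpa using hnot)
  -- put it together
  have htotal : ((𝒜.filter (fun g =>
      Multiset.countP (fun h => h.natDegree = i) (normalizedFactors g) = l)).card : ℚ) =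
      (t.card : ℚ) * ((Fintype.card F : ℚ) ^ (m - w - i * l) *
        (1 - ((Fintype.card F : ℚ) ^ i)⁻¹) ^
          (Fintype.card {h : Polynomial F // h.Monic ∧ Irreducible h ∧ h.natDegree = i})) := by
    rw [hpart]
    push_cast
    rw [Finset.sum_congr rfl (fun M hM => by rw [hfib M hM])]
    rw [Finset.sum_congr rfl (fun M hM => hfibval M hM)]
    rw [Finset.sum_const, nsmul_eq_mul]
  rw [htotal, htcard, ← hNc]
  -- final arithmetic
  have hil : i * l + w ≤ m := by
    have : i * l ≤ i * (Ni + l) := Nat.mul_le_mul_left i (by omega)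
    omega
  have hqq : (Fintype.card F : ℚ) ^ (m - w - i * l) =
      (Fintype.card F : ℚ) ^ (m - w) * (((Fintype.card F : ℚ) ^ i)⁻¹) ^ l := by
    have key : (Fintype.card F : ℚ) ^ (m - w - i * l) * ((Fintype.card F : ℚ) ^ i) ^ l =
        (Fintype.card F : ℚ) ^ (m - w) := by
      rw [← pow_mul, ← pow_add]
      congr 1
      omega
    have hqi : ((Fintype.card F : ℚ) ^ i) ^ l ≠ 0 := pow_ne_zero _ (pow_ne_zero _ hq0)
    field_simp
    rw [← key]
    rw [mul_assoc, ← mul_pow, mul_one_div_cancel (pow_ne_zero _ hq0), one_pow, mul_one]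
  rw [hqq]
  simp only [one_div]
  ring
end

section
/- If m ≥ q + l, the number of monic polynomials of degree m over F_q with exactly l linear factors counted with multiplicity (i.e., l roots in F_q with multiplicity) equals q^{m−l} · C(q + l − 1, l) · (1 − 1/q)^q. -/
open Polynomial

namespace Stmt13Aux

variable (F : Type*) [Field F] [Fintype F]

/-- The polynomial `∏ (X - α)` over all field elements. -/
noncomputable def P : F[X] := ∏ α : F, (X - C α)

lemma P_monic : (P F).Monic :=
  monic_prod_of_monic _ _ fun a _ => monic_X_sub_C a

lemma P_natDegree : (P F).natDegree = Fintype.card F := by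
  rw [P, natDegree_prod _ _ fun a _ => (monic_X_sub_C a).ne_zero]
  simp

lemma P_eval (a : F) : eval a (P F) = 0 := by
  rw [P, eval_prod]
  exact Finset.prod_eq_zero (Finset.mem_univ a) (by simp)

lemma P_degree : (P F).degree = (Fintype.card F : WithBot ℕ) := by
  rw [degree_eq_natDegree (P_monic F).ne_zero, P_natDegree]

/-- The number of monic polynomials of degree `n` is `q^n`. -/
lemma card_monic (n : ℕ) :
    Nat.card {p : F[X] // p.Monic ∧ p.natDegree = n} = Fintype.card F ^ n := by
  rw [Nat.card_congr ((monicEquivDegreeLT (R := F) n).trans (degreeLTEquiv F n).toEquiv)]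
  simp [Nat.card_eq_fintype_card]

/-- The number of monic degree-`n` polynomials with no roots, for `n ≥ q`. -/
lemma card_rootless (n : ℕ) (hn : Fintype.card F ≤ n) :
    Nat.card {g : F[X] // g.Monic ∧ g.natDegree = n ∧ ∀ α : F, eval α g ≠ 0} =
      (Fintype.card F - 1) ^ Fintype.card F *
        Fintype.card F ^ (n - Fintype.card F) := by
  classical
  set q := Fintype.card F with hq
  have hPm : (P F).Monic := P_monic F
  have hPd : (P F).degree = (q : WithBot ℕ) := P_degree F
  -- the map from (remainder, quotient) to the polynomial
  have hmem : ∀ (x : {r : Polynomial.degreeLT F q // ∀ α : F, eval α (r.1 : F[X]) ≠ 0} ×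
      {t : F[X] // t.Monic ∧ t.natDegree = n - q}),
      ((P F) * x.2.1 + (x.1.1 : F[X])).Monic ∧
      ((P F) * x.2.1 + (x.1.1 : F[X])).natDegree = n ∧
      ∀ α : F, eval α ((P F) * x.2.1 + (x.1.1 : F[X])) ≠ 0 := by
    rintro ⟨⟨⟨r, hr⟩, hrne⟩, ⟨t, htm, htd⟩⟩
    have hrd : r.degree < (q : WithBot ℕ) := Polynomial.mem_degreeLT.1 hr
    have hPt : ((P F) * t).degree = (n : WithBot ℕ) := by
      rw [degree_mul, hPd, degree_eq_natDegree htm.ne_zero, htd,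
        ← Nat.cast_add, Nat.add_sub_cancel' hn]
    have hlt : r.degree < ((P F) * t).degree := by
      rw [hPt]
      exact hrd.trans_le (Nat.cast_le.2 hn)
    refine ⟨(hPm.mul htm).add_of_left hlt, ?_, ?_⟩
    · rw [natDegree_add_eq_left_of_degree_lt hlt]
      exact natDegree_eq_of_degree_eq_some hPt
    · intro α
      simpa [P_eval] using hrne α
  have hbij : Function.Bijective
      (fun x : ({r : Polynomial.degreeLT F q // ∀ α : F, eval α (r.1 : F[X]) ≠ 0} ×
        {t : F[X] // t.Monic ∧ t.natDegree = n - q}) =>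
        (⟨(P F) * x.2.1 + (x.1.1 : F[X]), hmem x⟩ :
          {g : F[X] // g.Monic ∧ g.natDegree = n ∧ ∀ α : F, eval α g ≠ 0})) := by
    constructor
    · rintro ⟨⟨⟨r, hr⟩, hrne⟩, ⟨t, htm, htd⟩⟩ ⟨⟨⟨r', hr'⟩, hrne'⟩, ⟨t', htm', htd'⟩⟩ hxy
      simp only [Subtype.mk.injEq] at hxy
      have h1 := div_modByMonic_unique (f := (P F) * t + r) t r hPm
        ⟨by ring, (Polynomial.mem_degreeLT.1 hr).trans_le hPd.ge⟩
      have h2 := div_modByMonic_unique (f := (P F) * t + r) t' r' hPm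
        ⟨by rw [hxy]; ring, (Polynomial.mem_degreeLT.1 hr').trans_le hPd.ge⟩
      have ht : t = t' := h1.1.symm.trans h2.1
      have hrr : r = r' := h1.2.symm.trans h2.2
      subst ht; subst hrr
      rfl
    · rintro ⟨g, hgm, hgd, hgne⟩
      have hmod := modByMonic_add_div g (P F)
      have heval : ∀ α : F, eval α (g %ₘ P F) = eval α g := by
        intro α
        conv_rhs => rw [← hmod]
        simp [P_eval]
      have hgP : (P F).degree ≤ g.degree := by
        rw [hPd, degree_eq_natDegree hgm.ne_zero, hgd]
        exact_mod_cast Nat.cast_le.2 hn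
      refine ⟨⟨⟨⟨g %ₘ P F, Polynomial.mem_degreeLT.2 ?_⟩, ?_⟩,
        ⟨g /ₘ P F, ?_, ?_⟩⟩, ?_⟩
      · rw [← hPd]; exact degree_modByMonic_lt g hPm
      · intro α; rw [heval α]; exact hgne α
      · have := leadingCoeff_divByMonic_of_monic hPm hgP
        rwa [Monic, this]
      · rw [natDegree_divByMonic g hPm, hgd, P_natDegree]
      · apply Subtype.ext
        simpa [add_comm] using hmod
  rw [Nat.card_congr (Equiv.ofBijective _ hbij).symm, Nat.card_prod]
  congr 1
  · -- remainders with no zero values ↔ nowhere-zero functions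
    have hinj : Set.InjOn (id : F → F) (Finset.univ : Finset F) := Set.injOn_id _
    have e1 : {r : Polynomial.degreeLT F q // ∀ α : F, eval α (r.1 : F[X]) ≠ 0} ≃
        {v : ↥(Finset.univ : Finset F) → F // ∀ i, v i ≠ 0} := by
      refine Equiv.subtypeEquiv
        ((Lagrange.funEquivDegreeLT (F := F) (v := id) hinj).toEquiv) ?_
      intro r
      constructor
      · intro h i
        exact h i.1
      · intro h α
        exact h ⟨α, Finset.mem_univ α⟩
    have e2 : {v : ↥(Finset.univ : Finset F) → F // ∀ i, v i ≠ 0} ≃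
        ∀ i : ↥(Finset.univ : Finset F), {x : F // x ≠ 0} :=
      Equiv.subtypePiEquivPi (p := fun _ b => b ≠ 0)
    rw [Nat.card_congr (e1.trans e2), Nat.card_eq_fintype_card]
    have hc : Fintype.card {x : F // x ≠ 0} = q - 1 := by
      rw [Fintype.card_subtype_compl, Fintype.card_subtype_eq]
    simp [Fintype.card_pi, hc, Fintype.card_coe]
    congr 1
  · exact card_monic F (n - q)

omit [Fintype F] in
/-- Splitting off the linear factors. -/
lemma card_main (m l : ℕ) (hlm : l ≤ m) :
    Nat.card {g : F[X] // g.Monic ∧ g.natDegree = m ∧ Multiset.card g.roots = l} =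
      Nat.card (Sym F l) *
      Nat.card {h : F[X] // h.Monic ∧ h.natDegree = m - l ∧ ∀ α : F, eval α h ≠ 0} := by
  classical
  rw [← Nat.card_prod]
  have hmem : ∀ (x : Sym F l ×
      {h : F[X] // h.Monic ∧ h.natDegree = m - l ∧ ∀ α : F, eval α h ≠ 0}),
      ((x.1.1.map fun a => X - C a).prod * x.2.1).Monic ∧
      ((x.1.1.map fun a => X - C a).prod * x.2.1).natDegree = m ∧
      Multiset.card ((x.1.1.map fun a => X - C a).prod * x.2.1).roots = l := by
    rintro ⟨⟨s, hs⟩, ⟨h, hhm, hhd, hhne⟩⟩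
    have hDm : ((s.map fun a => X - C a).prod).Monic :=
      monic_multiset_prod_of_monic _ _ fun a _ => monic_X_sub_C a
    have hDd : ((s.map fun a => X - C a).prod).natDegree = l := by
      rw [natDegree_multiset_prod_X_sub_C_eq_card, hs]
    have hroots : h.roots = 0 :=
      Multiset.eq_zero_of_forall_notMem fun a ha =>
        hhne a ((mem_roots'.1 ha).2)
    refine ⟨hDm.mul hhm, ?_, ?_⟩
    · rw [hDm.natDegree_mul hhm, hDd, hhd]
      omega
    · rw [roots_mul (hDm.mul hhm).ne_zero, roots_multiset_prod_X_sub_C, hroots]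
      simp [hs]
  have hbij : Function.Bijective
      (fun x : (Sym F l ×
        {h : F[X] // h.Monic ∧ h.natDegree = m - l ∧ ∀ α : F, eval α h ≠ 0}) =>
        (⟨(x.1.1.map fun a => X - C a).prod * x.2.1, hmem x⟩ :
          {g : F[X] // g.Monic ∧ g.natDegree = m ∧ Multiset.card g.roots = l})) := by
    constructor
    · rintro ⟨⟨s, hs⟩, ⟨h, hhm, hhd, hhne⟩⟩ ⟨⟨s', hs'⟩, ⟨h', hhm', hhd', hhne'⟩⟩ hxy
      simp only [Subtype.mk.injEq] at hxy
      have hroots : h.roots = 0 :=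
        Multiset.eq_zero_of_forall_notMem fun a ha => hhne a ((mem_roots'.1 ha).2)
      have hroots' : h'.roots = 0 :=
        Multiset.eq_zero_of_forall_notMem fun a ha => hhne' a ((mem_roots'.1 ha).2)
      have hDm : ((s.map fun a => X - C a).prod).Monic :=
        monic_multiset_prod_of_monic _ _ fun a _ => monic_X_sub_C a
      have hDm' : ((s'.map fun a => X - C a).prod).Monic :=
        monic_multiset_prod_of_monic _ _ fun a _ => monic_X_sub_C a
      have hss : s = s' := by
        have h1 := congrArg Polynomial.roots hxy
        rwa [roots_mul (hDm.mul hhm).ne_zero, roots_mul (hDm'.mul hhm').ne_zero,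
          roots_multiset_prod_X_sub_C, roots_multiset_prod_X_sub_C,
          hroots, hroots', add_zero, add_zero] at h1
      subst hss
      have hhh : h = h' := mul_left_cancel₀ hDm.ne_zero hxy
      subst hhh
      rfl
    · rintro ⟨g, hgm, hgd, hgc⟩
      obtain ⟨h, he, hd, hr⟩ := exists_prod_multiset_X_sub_C_mul g
      have hDm : ((g.roots.map fun a => X - C a).prod).Monic :=
        monic_multiset_prod_of_monic _ _ fun a _ => monic_X_sub_C a
      have hhm : h.Monic := hDm.of_mul_monic_left (by rwa [he])
      have hhd : h.natDegree = m - l := by omega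
      have hhne : ∀ α : F, eval α h ≠ 0 := by
        intro α hα
        have : α ∈ h.roots := mem_roots'.2 ⟨hhm.ne_zero, hα⟩
        rw [hr] at this
        exact absurd this (Multiset.notMem_zero α)
      exact ⟨⟨⟨g.roots, hgc⟩, ⟨h, hhm, hhd, hhne⟩⟩, Subtype.ext he⟩
  exact (Nat.card_congr (Equiv.ofBijective _ hbij)).symm

end Stmt13Aux

/-- If `m ≥ q + l`, the number of monic polynomials of degree `m` over `F_q` with exactly `l`
linear factors counted with multiplicity (i.e. `l` roots in `F_q` with multiplicity) equals
`q^(m−l) · C(q + l − 1, l) · (1 − 1/q)^q`. -/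
theorem stmt_13 (q : ℕ) (F : Type*) [Field F] [Fintype F] (hF : Fintype.card F = q)
    (m l : ℕ) (hm : q + l ≤ m) :
    (Nat.card {g : Polynomial F // g.Monic ∧ g.natDegree = m ∧
        (∑ α : F, g.rootMultiplicity α) = l} : ℚ) =
      (q : ℚ) ^ (m - l) * ((q + l - 1).choose l) * (1 - 1 / (q : ℚ)) ^ q := by
  classical
  subst hF
  set q := Fintype.card F with hq
  have hq2 : 2 ≤ q := Fintype.one_lt_card
  have hsum : ∀ g : Polynomial F,
      (∑ α : F, g.rootMultiplicity α) = Multiset.card g.roots := by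
    intro g
    simp_rw [← count_roots]
    exact Multiset.sum_count_eq_card (fun a _ => Finset.mem_univ a)
  rw [Nat.card_congr (Equiv.subtypeEquivRight
    (fun g : Polynomial F => by rw [hsum g]) :
      {g : Polynomial F // g.Monic ∧ g.natDegree = m ∧
        (∑ α : F, g.rootMultiplicity α) = l} ≃
      {g : Polynomial F // g.Monic ∧ g.natDegree = m ∧ Multiset.card g.roots = l})]
  rw [Stmt13Aux.card_main F m l (by omega), Stmt13Aux.card_rootless F (m - l) (by omega),
    Nat.card_eq_fintype_card, Sym.card_sym_eq_choose]
  simp only [← hq]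
  have hq0 : (q : ℚ) ≠ 0 := Nat.cast_ne_zero.2 (by omega)
  have hml : m - l = (m - l - q) + q := by omega
  have h1 : (1 : ℚ) - 1 / q = ((q : ℚ) - 1) / q := by field_simp
  rw [hml, pow_add, h1, div_pow, Nat.add_sub_cancel]
  push_cast [Nat.cast_sub (by omega : 1 ≤ q)]
  field_simp
end

section
/- In the formal power series ring Z[[z]], one has the identity ∏_{i≥1} (1 − z^i)^{−N_i} = Σ_{k≥0} q^k z^k, where N_i is the number of monic irreducible polynomials of degree i over F_q. -/
open Polynomial PowerSeries

namespace Stmt16Aux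

open UniqueFactorizationMonoid

/-- The power series `(1 - X^i)⁻¹ = ∑_{i ∣ n} X^n` over `ℤ`. -/
noncomputable def g (i : ℕ) : PowerSeries ℤ := PowerSeries.mk fun n => if i ∣ n then 1 else 0

lemma coeff_g (i n : ℕ) : PowerSeries.coeff n (g i) = if i ∣ n then 1 else 0 :=
  PowerSeries.coeff_mk _ _

lemma one_sub_X_pow_mul_g {i : ℕ} (hi : 1 ≤ i) :
    (1 - (PowerSeries.X : PowerSeries ℤ) ^ i) * g i = 1 := by
  ext n
  rw [sub_mul, one_mul, map_sub, PowerSeries.coeff_X_pow_mul', PowerSeries.coeff_one]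
  rcases Nat.eq_zero_or_pos n with rfl | hn
  · rw [if_neg (by omega : ¬ i ≤ 0), coeff_g, if_pos (dvd_zero i), if_pos rfl, sub_zero]
  · rw [if_neg (by omega : ¬ n = 0), coeff_g]
    by_cases hle : i ≤ n
    · rw [if_pos hle, coeff_g]
      have hiff : i ∣ n ↔ i ∣ n - i := by
        constructor
        · exact fun h => Nat.dvd_sub h dvd_rfl
        · intro h
          have := Nat.dvd_add h (dvd_refl i)
          rwa [Nat.sub_add_cancel hle] at this
      by_cases hd : i ∣ n
      · rw [if_pos hd, if_pos (hiff.mp hd), sub_self]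
      · rw [if_neg hd, if_neg (fun h => hd (hiff.mpr h)), sub_self]
    · rw [if_neg hle, if_neg (fun h => hle (Nat.le_of_dvd hn h)), sub_zero]

lemma ring_inverse_eq_g {i : ℕ} (hi : 1 ≤ i) :
    Ring.inverse (1 - (PowerSeries.X : PowerSeries ℤ) ^ i) = g i := by
  have h := one_sub_X_pow_mul_g hi
  obtain ⟨u, hu⟩ := IsUnit.of_mul_eq_one _ h
  rw [← hu, Ring.inverse_unit]
  exact Units.inv_eq_of_mul_eq_one_right (by rw [hu]; exact h)


variable {F : Type*} [Field F]

/-- Monic polynomials of degree `m` are parametrized by their lower-order coefficients. -/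
noncomputable def monicEquiv (m : ℕ) :
    {f : F[X] // f.Monic ∧ f.natDegree = m} ≃ (degreeLT F m) where
  toFun f := ⟨f.1 - (Polynomial.X : F[X]) ^ m, by
    rw [Polynomial.mem_degreeLT, Polynomial.degree_lt_iff_coeff_zero]
    intro k hk
    have hk' : m ≤ k := by exact_mod_cast hk
    rw [Polynomial.coeff_sub, Polynomial.coeff_X_pow]
    obtain ⟨hf1, hf2⟩ := f.2
    rcases eq_or_lt_of_le hk' with rfl | hlt
    · rw [if_pos rfl]
      have := hf1.coeff_natDegree
      rw [hf2] at this
      rw [this, sub_self]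
    · rw [if_neg (by omega), Polynomial.coeff_eq_zero_of_natDegree_lt (by omega), sub_zero]⟩
  invFun p := ⟨p.1 + (Polynomial.X : F[X]) ^ m, by
    have hd : p.1.degree < (m : WithBot ℕ) := Polynomial.mem_degreeLT.mp p.2
    have hd' : p.1.degree < ((Polynomial.X : F[X]) ^ m : F[X]).degree := by rwa [Polynomial.degree_X_pow]
    constructor
    · rw [add_comm]; exact Polynomial.monic_X_pow_add hd
    · rw [Polynomial.natDegree_eq_of_degree_eq_some]
      rw [Polynomial.degree_add_eq_right_of_degree_lt hd', Polynomial.degree_X_pow]⟩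
  left_inv f := Subtype.ext (by simp)
  right_inv p := Subtype.ext (by simp)

lemma card_monic [Fintype F] (m : ℕ) :
    Nat.card {f : F[X] // f.Monic ∧ f.natDegree = m} = Fintype.card F ^ m := by
  rw [Nat.card_congr (monicEquiv m), Nat.card_congr (degreeLTEquiv F m).toEquiv]
  simp [Nat.card_eq_fintype_card]

instance [Fintype F] (m : ℕ) : Finite {f : F[X] // f.Monic ∧ f.natDegree = m} := by
  have : Finite (degreeLT F m) := Finite.of_equiv _ (degreeLTEquiv F m).toEquiv.symm
  exact Finite.of_equiv _ (monicEquiv m).symm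


variable {F : Type*} [Field F] [DecidableEq F]

lemma normalizedFactors_prod_pow (T : Finset F[X]) (hT : ∀ p ∈ T, p.Monic ∧ Irreducible p)
    (e : F[X] → ℕ) :
    normalizedFactors (∏ p ∈ T, p ^ e p) = ∑ p ∈ T, e p • ({p} : Multiset F[X]) := by
  classical
  induction T using Finset.induction_on with
  | empty => simp
  | @insert q s hq ih =>
    have hq' := hT q (Finset.mem_insert_self q s)
    have hs : ∀ p ∈ s, p.Monic ∧ Irreducible p := fun p hp => hT p (Finset.mem_insert_of_mem hp)
    rw [Finset.prod_insert hq, Finset.sum_insert hq,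
      normalizedFactors_mul (pow_ne_zero _ hq'.1.ne_zero)
        (Finset.prod_ne_zero_iff.mpr fun p hp => pow_ne_zero _ (hs p hp).1.ne_zero),
      normalizedFactors_pow, normalizedFactors_irreducible hq'.2,
      hq'.1.normalize_eq_self, ih hs]

lemma count_sum_smul (T : Finset F[X]) (e : F[X] → ℕ) {p : F[X]} (hp : p ∈ T) :
    Multiset.count p (∑ q ∈ T, e q • ({q} : Multiset F[X])) = e p := by
  classical
  rw [Multiset.count_sum']
  rw [Finset.sum_eq_single p (fun q _ hqp => by
    rw [Multiset.count_nsmul, Multiset.count_singleton, if_neg (Ne.symm hqp), mul_zero])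
    (fun h => absurd hp h)]
  rw [Multiset.count_nsmul, Multiset.count_singleton, if_pos rfl, mul_one]


lemma card_bij_lemma (m M : ℕ) (hM : m ≤ M) (T : Finset F[X])
    (hTmem : ∀ p, p ∈ T ↔ p.Monic ∧ Irreducible p ∧ p.natDegree ∈ Finset.Icc 1 M)
    (t : Finset F[X]) (htmem : ∀ f, f ∈ t ↔ f.Monic ∧ f.natDegree = m) :
    ((Finset.finsuppAntidiag T m).filter fun l => ∀ p ∈ T, p.natDegree ∣ l p).card = t.card := by
  classical
  have hTm : ∀ p ∈ T, p.Monic := fun p hp => ((hTmem p).mp hp).1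
  have hTi : ∀ p ∈ T, Irreducible p := fun p hp => ((hTmem p).mp hp).2.1
  have hTd : ∀ p ∈ T, 1 ≤ p.natDegree := fun p hp =>
    (Finset.mem_Icc.mp ((hTmem p).mp hp).2.2).1
  apply Finset.card_bij (fun l _ => ∏ p ∈ T, p ^ (l p / p.natDegree))
  · -- maps into t
    intro l hl
    rw [Finset.mem_filter, Finset.mem_finsuppAntidiag] at hl
    obtain ⟨⟨hsum, hsupp⟩, hdvd⟩ := hl
    rw [htmem]
    constructor
    · exact Polynomial.monic_prod_of_monic _ _ fun p hp => (hTm p hp).pow _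
    · rw [Polynomial.natDegree_prod _ _ fun p hp => pow_ne_zero _ (hTm p hp).ne_zero]
      rw [← hsum]
      apply Finset.sum_congr rfl
      intro p hp
      rw [Polynomial.natDegree_pow, Nat.div_mul_cancel (hdvd p hp)]
  · -- injective
    intro l₁ hl₁ l₂ hl₂ heq
    rw [Finset.mem_filter, Finset.mem_finsuppAntidiag] at hl₁ hl₂
    ext p
    by_cases hp : p ∈ T
    · have h₁ : Multiset.count p (normalizedFactors (∏ q ∈ T, q ^ (l₁ q / q.natDegree)))
          = l₁ p / p.natDegree := by
        rw [normalizedFactors_prod_pow T (fun q hq => ⟨hTm q hq, hTi q hq⟩),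
          count_sum_smul T _ hp]
      have h₂ : Multiset.count p (normalizedFactors (∏ q ∈ T, q ^ (l₂ q / q.natDegree)))
          = l₂ p / p.natDegree := by
        rw [normalizedFactors_prod_pow T (fun q hq => ⟨hTm q hq, hTi q hq⟩),
          count_sum_smul T _ hp]
      have : l₁ p / p.natDegree = l₂ p / p.natDegree := by rw [← h₁, ← h₂, heq]
      have e₁ := Nat.div_mul_cancel (hl₁.2 p hp)
      have e₂ := Nat.div_mul_cancel (hl₂.2 p hp)
      rw [← e₁, ← e₂, this]
    · have z₁ : l₁ p = 0 := Finsupp.notMem_support_iff.mp fun h => hp (hl₁.1.2 h)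
      have z₂ : l₂ p = 0 := Finsupp.notMem_support_iff.mp fun h => hp (hl₂.1.2 h)
      rw [z₁, z₂]
  · -- surjective
    intro f hf
    rw [htmem] at hf
    obtain ⟨hmon, hdeg⟩ := hf
    have hf0 : f ≠ 0 := hmon.ne_zero
    set t₀ := normalizedFactors f with ht₀
    have hfac : ∀ p ∈ t₀, p.Monic ∧ Irreducible p ∧ p.natDegree ∈ Finset.Icc 1 M := by
      intro p hp
      have hirr : Irreducible p := irreducible_of_normalized_factor p hp
      have hmonic : p.Monic := by
        have := Polynomial.monic_normalize (hirr.ne_zero)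
        rwa [normalize_normalized_factor p hp] at this
      refine ⟨hmonic, hirr, Finset.mem_Icc.mpr ⟨hirr.natDegree_pos, ?_⟩⟩
      exact le_trans (Polynomial.natDegree_le_of_dvd (dvd_of_mem_normalizedFactors hp) hf0)
        (hdeg ▸ hM)
    have hsub : t₀.toFinset ⊆ T := fun p hp => (hTmem p).mpr (hfac p (Multiset.mem_toFinset.mp hp))
    have hprod : t₀.prod = f := by
      apply Polynomial.eq_of_monic_of_associated _ hmon (prod_normalizedFactors hf0)
      have := Polynomial.monic_multiset_prod_of_monic t₀ id (fun p hp => (hfac p hp).1)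
      simpa using this
    -- the candidate finsupp
    refine ⟨Finsupp.onFinset T (fun p => if p ∈ T then p.natDegree * t₀.count p else 0)
      (fun a ha => by by_contra h; simp [h] at ha), ?_, ?_⟩
    · rw [Finset.mem_filter, Finset.mem_finsuppAntidiag]
      refine ⟨⟨?_, Finsupp.support_onFinset_subset⟩, ?_⟩
      · -- sum = m
        have step1 : ∑ p ∈ T, (if p ∈ T then p.natDegree * t₀.count p else 0)
            = ∑ p ∈ T, t₀.count p * p.natDegree := by
          apply Finset.sum_congr rfl
          intro p hp
          rw [if_pos hp, mul_comm]
        calc (∑ p ∈ T, Finsupp.onFinset T _ _ p) = ∑ p ∈ T, t₀.count p * p.natDegree := by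
              simp only [Finsupp.onFinset_apply]; exact step1
          _ = ∑ p ∈ t₀.toFinset, t₀.count p * p.natDegree := by
              symm
              apply Finset.sum_subset hsub
              intro p _ hpn
              rw [Multiset.count_eq_zero.mpr (fun h => hpn (Multiset.mem_toFinset.mpr h)), zero_mul]
          _ = (t₀.map Polynomial.natDegree).sum := by
              rw [Finset.sum_multiset_map_count]
              simp [smul_eq_mul]
          _ = t₀.prod.natDegree := by
              rw [Polynomial.natDegree_multiset_prod_of_monic _ (fun p hp => (hfac p hp).1)]
          _ = m := by rw [hprod, hdeg]
      · intro p hp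
        simp only [Finsupp.onFinset_apply, if_pos hp]
        exact dvd_mul_right _ _
    · -- the product recovers f
      have : ∀ p ∈ T,
          p ^ ((Finsupp.onFinset T (fun p => if p ∈ T then p.natDegree * t₀.count p else 0)
            (fun a ha => by by_contra h; simp [h] at ha)) p / p.natDegree) = p ^ t₀.count p := by
        intro p hp
        congr 1
        simp only [Finsupp.onFinset_apply, if_pos hp]
        exact Nat.mul_div_cancel_left _ (hTd p hp)
      rw [Finset.prod_congr rfl this, ← Finset.prod_multiset_count_of_subset t₀ T hsub, hprod]


end Stmt16Aux

open Stmt16Aux UniqueFactorizationMonoid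

/-- In `ℤ[[z]]`, `∏_{i≥1} (1 − z^i)^(−N_i) = Σ_{k≥0} q^k z^k`, where `N_i` is the number of
monic irreducible polynomials of degree `i` over `F_q`. Since the infinite product converges
coefficientwise in the `(z)`-adic topology (the factors for `i > m` do not affect the
coefficient of `z^m`), the identity is expressed as: for every `m` and every `M ≥ m`, the
`z^m`-coefficient of the partial product `∏_{i=1}^{M} (1 − z^i)^(−N_i)` equals `q^m`. -/
theorem stmt_16 (q : ℕ) (F : Type*) [Field F] [Fintype F] (hF : Fintype.card F = q)
    (N : ℕ → ℕ)
    (hN : ∀ i, N i = Nat.card {h : Polynomial F // h.Monic ∧ Irreducible h ∧ h.natDegree = i})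
    (m M : ℕ) (hM : m ≤ M) :
    PowerSeries.coeff (R := ℤ) m
        (∏ i ∈ Finset.Icc 1 M,
          (Ring.inverse (1 - (PowerSeries.X : PowerSeries ℤ) ^ i)) ^ N i) =
      (q : ℤ) ^ m := by
  classical
  -- finiteness of sets of monic polynomials of fixed degree
  have hone : ∀ i, Finite ↥{p : F[X] | p.Monic ∧ p.natDegree = i} := fun i =>
    Finite.of_equiv {f : F[X] // f.Monic ∧ f.natDegree = i}
      (Equiv.subtypeEquivRight fun x => by simp [Set.mem_setOf_eq])
  -- the finite set of monic irreducibles of degree between 1 and M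
  have hTfin : ({p : F[X] | p.Monic ∧ Irreducible p ∧ p.natDegree ∈ Finset.Icc 1 M}).Finite := by
    have hsub : {p : F[X] | p.Monic ∧ Irreducible p ∧ p.natDegree ∈ Finset.Icc 1 M} ⊆
        ⋃ i ∈ Finset.Icc 1 M, {p : F[X] | p.Monic ∧ p.natDegree = i} := by
      intro p hp
      exact Set.mem_biUnion hp.2.2 ⟨hp.1, rfl⟩
    exact Set.Finite.subset
      (Set.Finite.biUnion (Finset.Icc 1 M).finite_toSet fun i _ => @Set.toFinite _ _ (hone i))
      hsub
  set T : Finset F[X] := hTfin.toFinset with hT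
  have hTmem : ∀ p, p ∈ T ↔ p.Monic ∧ Irreducible p ∧ p.natDegree ∈ Finset.Icc 1 M :=
    fun p => hTfin.mem_toFinset
  -- the finite set of monic polynomials of degree m
  have htfin : ({f : F[X] | f.Monic ∧ f.natDegree = m}).Finite := @Set.toFinite _ _ (hone m)
  set t : Finset F[X] := htfin.toFinset with htdef
  have htmem : ∀ f, f ∈ t ↔ f.Monic ∧ f.natDegree = m := fun f => htfin.mem_toFinset
  have htcard : t.card = q ^ m := by
    have h1 : t.card = Nat.card {f : F[X] // f.Monic ∧ f.natDegree = m} := by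
      rw [← Set.ncard_eq_toFinset_card _ htfin, ← Nat.card_coe_set_eq]
      exact (Nat.card_congr (Equiv.subtypeEquivRight fun x => by simp [Set.mem_setOf_eq])).symm
    rw [h1, card_monic, hF]
  -- fiber cardinalities
  have hcard : ∀ i ∈ Finset.Icc 1 M, (T.filter fun p => p.natDegree = i).card = N i := by
    intro i hi
    rw [hN i]
    have hseteq : ((T.filter fun p => p.natDegree = i) : Set F[X]) =
        {p : F[X] | p.Monic ∧ Irreducible p ∧ p.natDegree = i} := by
      ext p
      simp only [Finset.coe_filter, Set.mem_setOf_eq, hTmem]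
      constructor
      · rintro ⟨⟨h1, h2, _⟩, h4⟩; exact ⟨h1, h2, h4⟩
      · rintro ⟨h1, h2, h3⟩; exact ⟨⟨h1, h2, h3 ▸ hi⟩, h3⟩
    have := Set.ncard_coe_finset (T.filter fun p => p.natDegree = i)
    rw [hseteq] at this
    rw [← this, ← Nat.card_coe_set_eq]
    exact (Nat.card_congr (Equiv.subtypeEquivRight fun x => by simp [Set.mem_setOf_eq]))
  -- rewrite the inverses
  have hrw : (∏ i ∈ Finset.Icc 1 M,
      (Ring.inverse (1 - (PowerSeries.X : PowerSeries ℤ) ^ i)) ^ N i) =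
      ∏ i ∈ Finset.Icc 1 M, g i ^ N i :=
    Finset.prod_congr rfl fun i hi => by rw [ring_inverse_eq_g (Finset.mem_Icc.mp hi).1]
  rw [hrw]
  -- fiberwise
  have hmaps : ∀ p ∈ T, p.natDegree ∈ Finset.Icc 1 M := fun p hp => ((hTmem p).mp hp).2.2
  have hstep : (∏ i ∈ Finset.Icc 1 M, g i ^ N i) = ∏ p ∈ T, g p.natDegree := by
    rw [← Finset.prod_fiberwise_of_maps_to hmaps (fun p => g p.natDegree)]
    apply Finset.prod_congr rfl
    intro i hi
    rw [Finset.prod_congr rfl (fun p hp => by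
        rw [(Finset.mem_filter.mp hp).2] : ∀ p ∈ T.filter fun p => p.natDegree = i,
          g p.natDegree = g i),
      Finset.prod_const, hcard i hi]
  rw [hstep, PowerSeries.coeff_prod]
  have hterm : ∀ l ∈ Finset.finsuppAntidiag T m,
      (∏ p ∈ T, PowerSeries.coeff (l p) (g p.natDegree)) =
        if (∀ p ∈ T, p.natDegree ∣ l p) then 1 else 0 := by
    intro l _
    rw [Finset.prod_congr rfl fun p _ => coeff_g p.natDegree (l p), Finset.prod_boole]
  rw [Finset.sum_congr rfl hterm, Finset.sum_boole,
    card_bij_lemma m M hM T hTmem t htmem, htcard]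
  push_cast
  ring
end

section
/- Let q = p^e, p prime, and for each α ∈ F_q let g_α(y) = 1 + (1 + αx)y, an element of R[[y]] where R = F_q[x]/(x²) is encoded via the group algebra C[G] with G = {⟨x+α⟩ : α ∈ F_q}, ⟨x+α⟩⟨x+β⟩ = ⟨x+α+β⟩. With E = (1/q) Σ_{α} ⟨x+α⟩ and J = 1 − E, one has in C[G][[y]]: J · ∏_{α ∈ F_q} (1 + ⟨x+α⟩ y) = J · (1 − (−y)^p)^{q/p}. -/
open PowerSeries

section Aux

/-- Core cyclotomic identity: `∏_{i<p} (1 + ζ^i X) = 1 - (-X)^p` for a primitive `p`-th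
root of unity `ζ`. -/
lemma aux_poly_prod (p : ℕ) (hp : p.Prime) (ζ : ℂ) (hζ : IsPrimitiveRoot ζ p) :
    ∏ i ∈ Finset.range p, (1 + Polynomial.C (ζ^i) * Polynomial.X) = 1 - (-Polynomial.X)^p := by
  have himg : (Finset.range p).image (fun i => ζ ^ i) = Polynomial.nthRootsFinset p (1 : ℂ) := by
    apply Finset.eq_of_subset_of_card_le
    · intro x hx
      simp only [Finset.mem_image, Finset.mem_range] at hx
      obtain ⟨i, _, rfl⟩ := hx
      exact (Polynomial.mem_nthRootsFinset hp.pos (1 : ℂ)).2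
        (by rw [← pow_mul, mul_comm, pow_mul, hζ.pow_eq_one, one_pow])
    · rw [hζ.card_nthRootsFinset, Finset.card_image_of_injOn]
      · simp
      · intro a ha b hb hab
        exact hζ.pow_inj (Finset.mem_range.1 ha) (Finset.mem_range.1 hb) hab
  have key : ∀ s : ℂ, s ^ p - 1 = ∏ i ∈ Finset.range p, (s - ζ ^ i) := by
    intro s
    have := congrArg (Polynomial.eval s) (Polynomial.X_pow_sub_one_eq_prod hp.pos hζ)
    rw [← himg, Finset.prod_image (fun a ha b hb hab =>
      hζ.pow_inj (Finset.mem_range.1 ha) (Finset.mem_range.1 hb) hab)] at this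
    simpa [Polynomial.eval_prod] using this
  apply Polynomial.funext
  intro t
  simp only [Polynomial.eval_prod, Polynomial.eval_add, Polynomial.eval_one, Polynomial.eval_mul,
    Polynomial.eval_C, Polynomial.eval_X, Polynomial.eval_sub, Polynomial.eval_pow,
    Polynomial.eval_neg]
  rcases eq_or_ne t 0 with rfl | ht
  · simp [zero_pow hp.pos.ne']
  · have h1 : ∀ i : ℕ, 1 + ζ ^ i * t = (-t) * ((-t⁻¹) - ζ ^ i) := by
      intro i; field_simp; ring
    calc ∏ i ∈ Finset.range p, (1 + ζ ^ i * t)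
        = ∏ i ∈ Finset.range p, ((-t) * ((-t⁻¹) - ζ ^ i)) :=
          Finset.prod_congr rfl fun i _ => h1 i
      _ = (-t)^p * ∏ i ∈ Finset.range p, ((-t⁻¹) - ζ ^ i) := by
          rw [Finset.prod_mul_distrib, Finset.prod_const, Finset.card_range]
      _ = (-t)^p * ((-t⁻¹)^p - 1) := by rw [← key]
      _ = 1 - (-t)^p := by
          have h2 : (-t)^p * (-t⁻¹)^p = 1 := by
            rw [← mul_pow, neg_mul_neg, mul_inv_cancel₀ ht, one_pow]
          rw [mul_sub, h2, mul_one]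

/-- Power series version of `aux_poly_prod`. -/
lemma aux_ps_prod (p : ℕ) (hp : p.Prime) (ζ : ℂ) (hζ : IsPrimitiveRoot ζ p) :
    ∏ i ∈ Finset.range p, (1 + PowerSeries.C (ζ^i) * PowerSeries.X) =
      1 - (-PowerSeries.X)^p := by
  have h := congrArg (Polynomial.coeToPowerSeries.ringHom (R := ℂ)) (aux_poly_prod p hp ζ hζ)
  simpa only [map_prod, map_add, map_mul, map_one, map_sub, map_pow, map_neg,
    Polynomial.coeToPowerSeries.ringHom_apply, Polynomial.coe_C, Polynomial.coe_X] using h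

end Aux

/-- Let `G` be the group `{⟨x+α⟩ : α ∈ F_q}` (isomorphic to the additive group of `F_q`,
encoded as `Multiplicative F_q`), `ℂ[G]` its complex group algebra,
`E = (1/q) Σ_α ⟨x+α⟩` and `J = 1 − E`. Then in `ℂ[G][[y]]`:
`J · ∏_{α ∈ F_q} (1 + ⟨x+α⟩ y) = J · (1 − (−y)^p)^(q/p)`. -/
theorem stmt_19 (p e q : ℕ) (hp : p.Prime) (he : 0 < e) (hq : q = p ^ e)
    (F : Type*) [Field F] [Fintype F] [CharP F p] (hF : Fintype.card F = q)
    (E J : MonoidAlgebra ℂ (Multiplicative F))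
    (hE : E = (q : ℂ)⁻¹ • ∑ α : F, MonoidAlgebra.of ℂ (Multiplicative F) (Multiplicative.ofAdd α))
    (hJ : J = 1 - E) :
    PowerSeries.C J *
        ∏ α : F, (1 + PowerSeries.C
            (MonoidAlgebra.of ℂ (Multiplicative F) (Multiplicative.ofAdd α)) * PowerSeries.X) =
      PowerSeries.C J *
        (1 - (-PowerSeries.X) ^ p) ^ (q / p) := by
  classical
  haveI : Fact p.Prime := ⟨hp⟩
  haveI : NeZero p := ⟨hp.ne_zero⟩
  letI : Algebra (ZMod p) F := ZMod.algebra F p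
  -- basic numerology
  have hq0 : q ≠ 0 := by rw [hq]; exact pow_ne_zero _ hp.ne_zero
  have hqC : (q : ℂ) ≠ 0 := Nat.cast_ne_zero.mpr hq0
  have hpq : p * (q / p) = q := by
    rw [hq]
    have : p ∣ p ^ e := dvd_pow_self p he.ne'
    rw [← hq, Nat.mul_div_cancel' (by rw [hq]; exact this)]
  -- a nonzero linear functional on F
  obtain ⟨f, hf1⟩ : ∃ f : F →ₗ[ZMod p] ZMod p, f 1 ≠ 0 := by
    by_contra h
    push_neg at h
    exact one_ne_zero ((Module.forall_dual_apply_eq_zero_iff (ZMod p) (1 : F)).1 h)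
  have hsurj : ∀ j : ZMod p, ∃ x : F, f x = j := by
    intro j
    refine ⟨(j / f 1) • (1 : F), ?_⟩
    rw [map_smul, smul_eq_mul, div_mul_cancel₀ _ hf1]
  -- the primitive p-th root of unity
  set ζ : ℂ := Complex.exp (2 * Real.pi * Complex.I / p) with hζdef
  have hζ : IsPrimitiveRoot ζ p := Complex.isPrimitiveRoot_exp p hp.ne_zero
  set ω : ZMod p → ℂ := fun j => ζ ^ j.val with hωdef
  have hω0 : ω 0 = 1 := by simp [hωdef, ZMod.val_zero]
  have horder : orderOf ζ = p := hζ.eq_orderOf.symm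
  have hωadd : ∀ a b : ZMod p, ω (a + b) = ω a * ω b := by
    intro a b
    show ζ ^ (a + b).val = ζ ^ a.val * ζ ^ b.val
    have hpow : ∀ m : ℕ, ζ ^ (m % p) = ζ ^ m := by
      intro m
      conv_rhs => rw [← Nat.div_add_mod m p]
      rw [pow_add, pow_mul, hζ.pow_eq_one, one_pow, one_mul]
    rw [← pow_add, ZMod.val_add, hpow]
  have hωinj : Function.Injective ω := by
    intro a b hab
    exact ZMod.val_injective p (hζ.pow_inj (ZMod.val_lt a) (ZMod.val_lt b) hab)
  -- the characters
  set χ : F → (Multiplicative F →* ℂ) := fun c =>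
    { toFun := fun g => ω (f (c * g.toAdd))
      map_one' := by simp [hω0]
      map_mul' := by
        intro g h
        simp only [toAdd_mul, mul_add, map_add, hωadd] } with hχdef
  have hχapply : ∀ c γ : F, χ c (Multiplicative.ofAdd γ) = ω (f (c * γ)) := fun c γ => rfl
  set φ : F → (MonoidAlgebra ℂ (Multiplicative F) →ₐ[ℂ] ℂ) := fun c => MonoidAlgebra.lift ℂ ℂ (Multiplicative F) (χ c) with hφdef
  have hφof : ∀ c γ : F,
      φ c (MonoidAlgebra.of ℂ (Multiplicative F) (Multiplicative.ofAdd γ)) = ω (f (c * γ)) := by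
    intro c γ
    rw [hφdef]
    exact MonoidAlgebra.lift_of (χ c) _
  -- fiber counting
  have hfib : ∀ j : ZMod p, (Finset.univ.filter fun α : F => f α = j).card = q / p := by
    have hfib0 : ∀ j : ZMod p, (Finset.univ.filter fun α : F => f α = j).card =
        (Finset.univ.filter fun α : F => f α = 0).card := by
      intro j
      obtain ⟨xj, hxj⟩ := hsurj j
      apply Finset.card_bij' (fun x _ => x - xj) (fun x _ => x + xj)
      · intro a ha
        simp only [Finset.mem_filter, Finset.mem_univ, true_and] at ha ⊢
        rw [map_sub, ha, hxj, sub_self]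
      · intro a ha
        simp only [Finset.mem_filter, Finset.mem_univ, true_and] at ha ⊢
        rw [map_add, ha, hxj, zero_add]
      · intro a _; ring
      · intro a _; ring
    have hcardsum : q = ∑ j : ZMod p, (Finset.univ.filter fun α : F => f α = j).card := by
      rw [← hF, ← Finset.card_univ]
      exact Finset.card_eq_sum_card_fiberwise (fun x _ => Finset.mem_univ (f x))
    have : q = p * (Finset.univ.filter fun α : F => f α = 0).card := by
      rw [hcardsum]
      rw [Finset.sum_congr rfl (fun j _ => hfib0 j), Finset.sum_const, Finset.card_univ,
        ZMod.card p, smul_eq_mul]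
    intro j
    rw [hfib0 j]
    exact (Nat.div_eq_of_eq_mul_right hp.pos this).symm
  -- sum of character values over ZMod p
  have hωsum : ∑ j : ZMod p, ω j = 0 := by
    have : ∑ j : ZMod p, ω j = ∑ i ∈ Finset.range p, ζ ^ i := by
      refine Finset.sum_nbij' (fun j => j.val) (fun i => (i : ZMod p)) ?_ ?_ ?_ ?_ ?_
      · intro j _; exact Finset.mem_range.2 (ZMod.val_lt j)
      · intro i _; exact Finset.mem_univ _
      · intro j _; simp [ZMod.natCast_val, ZMod.cast_id]
      · intro i hi; exact ZMod.val_cast_of_lt (Finset.mem_range.1 hi)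
      · intro j _; rfl
    rw [this]
    exact hζ.geom_sum_eq_zero hp.one_lt
  -- sum of character values over F
  have hsumF : ∑ γ : F, ω (f γ) = 0 := by
    rw [← Finset.sum_fiberwise Finset.univ (fun γ => f γ) (fun γ => ω (f γ))]
    have : ∀ j : ZMod p, ∑ γ ∈ Finset.univ.filter (fun γ : F => f γ = j), ω (f γ) =
        (q / p : ℕ) * ω j := by
      intro j
      rw [Finset.sum_congr rfl (fun γ hγ => by
        rw [(Finset.mem_filter.1 hγ).2]), Finset.sum_const, hfib j, nsmul_eq_mul]
    rw [Finset.sum_congr rfl (fun j _ => this j), ← Finset.mul_sum, hωsum, mul_zero]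
  have hsumFc : ∀ c : F, c ≠ 0 → ∑ γ : F, ω (f (c * γ)) = 0 := by
    intro c hc
    rw [Fintype.sum_bijective (fun γ : F => c * γ)
      (Equiv.mulLeft₀ c hc).bijective _ (fun γ => ω (f γ)) (fun γ => rfl)]
    exact hsumF
  -- values of φ c on E and J
  have hφE : ∀ c : F, φ c E = if c = 0 then 1 else 0 := by
    intro c
    rw [hE, map_smul, map_sum]
    have : ∀ γ : F, φ c (MonoidAlgebra.of ℂ (Multiplicative F) (Multiplicative.ofAdd γ)) =
        ω (f (c * γ)) := hφof c
    rw [Finset.sum_congr rfl (fun γ _ => this γ)]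
    rcases eq_or_ne c 0 with rfl | hc
    · simp only [zero_mul, map_zero, hω0, Finset.sum_const, Finset.card_univ, hF,
        nsmul_eq_mul, mul_one, if_pos rfl]
      rw [smul_eq_mul, inv_mul_cancel₀ hqC]
      simp
    · rw [hsumFc c hc, smul_zero, if_neg hc]
  have hφJ : ∀ c : F, φ c J = if c = 0 then 0 else 1 := by
    intro c
    rw [hJ, map_sub, map_one, hφE]
    rcases eq_or_ne c 0 with rfl | hc
    · simp
    · simp [hc]
  -- injectivity of the joint character evaluation
  have hχinj : Function.Injective χ := by
    intro a b hab
    by_contra hne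
    have hd : a - b ≠ 0 := sub_ne_zero.2 hne
    have := congrFun (congrArg (fun F => F.toFun) hab) (Multiplicative.ofAdd (a - b)⁻¹)
    have hfe : f (a * (a - b)⁻¹) = f (b * (a - b)⁻¹) := hωinj this
    have : f ((a - b) * (a - b)⁻¹) = 0 := by
      rw [sub_mul, map_sub, hfe, sub_self]
    rw [mul_inv_cancel₀ hd] at this
    exact hf1 this
  have hinj : ∀ x : MonoidAlgebra ℂ (Multiplicative F), (∀ c : F, φ c x = 0) → x = 0 := by
    intro x hx
    have hlift : ∀ c : F, ∑ g : Multiplicative F, x.coeff g • χ c g = 0 := by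
      intro c
      have := hx c
      rw [hφdef] at this
      rw [MonoidAlgebra.lift_apply] at this
      rwa [Finsupp.sum_fintype _ _ (fun g => by simp)] at this
    have hli : LinearIndependent ℂ (fun γ : F => ((χ γ : Multiplicative F →* ℂ) :
        Multiplicative F → ℂ)) :=
      (linearIndependent_monoidHom (Multiplicative F) ℂ).comp χ hχinj
    have hzero : ∀ γ : F, x.coeff (Multiplicative.ofAdd γ) = 0 := by
      have hsum : ∑ γ : F, x.coeff (Multiplicative.ofAdd γ) •
          ((χ γ : Multiplicative F →* ℂ) : Multiplicative F → ℂ) = 0 := by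
        funext g
        rw [Finset.sum_apply]
        simp only [Pi.smul_apply, Pi.zero_apply]
        have hsym : ∀ γ : F, χ γ g = χ g.toAdd (Multiplicative.ofAdd γ) := by
          intro γ
          show ω (f (γ * g.toAdd)) = ω (f (g.toAdd * γ))
          rw [mul_comm]
        rw [Finset.sum_congr rfl (fun γ _ => by rw [hsym γ])]
        have := hlift g.toAdd
        rw [← Equiv.sum_comp (Multiplicative.ofAdd (α := F))
          (fun g' => x.coeff g' • χ g.toAdd g')] at this
        exact this
      exact fun γ => Fintype.linearIndependent_iff.1 hli _ hsum γ
    ext g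
    have := hzero g.toAdd
    simpa using this
  -- the per-character product identity
  have hprod : ∀ c : F, c ≠ 0 →
      ∏ α : F, (1 + PowerSeries.C (ω (f (c * α))) * PowerSeries.X) =
        (1 - (-PowerSeries.X) ^ p) ^ (q / p) := by
    intro c hc
    rw [Fintype.prod_bijective (fun γ : F => c * γ) (Equiv.mulLeft₀ c hc).bijective _
      (fun γ => 1 + PowerSeries.C (ω (f γ)) * PowerSeries.X) (fun γ => rfl)]
    rw [← Finset.prod_fiberwise Finset.univ (fun γ : F => f γ)
      (fun γ => 1 + PowerSeries.C (ω (f γ)) * PowerSeries.X)]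
    have hstep : ∀ j : ZMod p,
        ∏ γ ∈ Finset.univ.filter (fun γ : F => f γ = j),
          (1 + PowerSeries.C (ω (f γ)) * PowerSeries.X) =
        (1 + PowerSeries.C (ω j) * PowerSeries.X) ^ (q / p) := by
      intro j
      rw [Finset.prod_congr rfl (fun γ hγ => by rw [(Finset.mem_filter.1 hγ).2]),
        Finset.prod_const, hfib j]
    rw [Finset.prod_congr rfl (fun j _ => hstep j), Finset.prod_pow]
    congr 1
    have : ∏ j : ZMod p, (1 + PowerSeries.C (ω j) * PowerSeries.X) =
        ∏ i ∈ Finset.range p, (1 + PowerSeries.C (ζ ^ i) * PowerSeries.X) := by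
      refine Finset.prod_nbij' (fun j => j.val) (fun i => (i : ZMod p)) ?_ ?_ ?_ ?_ ?_
      · intro j _; exact Finset.mem_range.2 (ZMod.val_lt j)
      · intro i _; exact Finset.mem_univ _
      · intro j _; simp [ZMod.natCast_val, ZMod.cast_id]
      · intro i hi; exact ZMod.val_cast_of_lt (Finset.mem_range.1 hi)
      · intro j _; rfl
    rw [this]
    exact aux_ps_prod p hp ζ hζ
  -- assemble: both sides have the same image under every character map
  have hmap : ∀ c : F,
      PowerSeries.map (φ c).toRingHom
        (PowerSeries.C J * ∏ α : F, (1 + PowerSeries.C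
          (MonoidAlgebra.of ℂ (Multiplicative F) (Multiplicative.ofAdd α)) * PowerSeries.X)) =
      PowerSeries.map (φ c).toRingHom
        (PowerSeries.C J * (1 - (-PowerSeries.X) ^ p) ^ (q / p)) := by
    intro c
    rw [map_mul, map_mul, map_prod]
    have hC : ∀ a : MonoidAlgebra ℂ (Multiplicative F), PowerSeries.map (φ c).toRingHom (PowerSeries.C a) =
        PowerSeries.C (φ c a) := fun a => PowerSeries.map_C _ _
    have hXm : PowerSeries.map (φ c).toRingHom (PowerSeries.X) = PowerSeries.X :=
      PowerSeries.map_X _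
    have hRHS : PowerSeries.map (φ c).toRingHom ((1 - (-PowerSeries.X) ^ p) ^ (q / p)) =
        (1 - (-PowerSeries.X) ^ p) ^ (q / p) := by
      rw [map_pow, map_sub, map_one, map_pow, map_neg, hXm]
    have hfactors : ∀ α : F, PowerSeries.map (φ c).toRingHom
        (1 + PowerSeries.C (MonoidAlgebra.of ℂ (Multiplicative F)
          (Multiplicative.ofAdd α)) * PowerSeries.X) =
        1 + PowerSeries.C (ω (f (c * α))) * PowerSeries.X := by
      intro α
      rw [map_add, map_one, map_mul, hC, hXm, hφof]
    rw [Finset.prod_congr rfl (fun α _ => hfactors α), hC, hRHS]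
    rcases eq_or_ne c 0 with rfl | hc
    · rw [hφJ, if_pos rfl, map_zero, zero_mul, zero_mul]
    · rw [hφJ, if_neg hc, hprod c hc]
  -- conclude by injectivity, coefficientwise
  apply PowerSeries.ext
  intro n
  rw [← sub_eq_zero, ← map_sub]
  apply hinj
  intro c
  have h2 := congrArg (PowerSeries.coeff n) (hmap c)
  rw [PowerSeries.coeff_map, PowerSeries.coeff_map] at h2
  simp only [AlgHom.toRingHom_eq_coe, RingHom.coe_coe] at h2
  refine (map_sub (φ c) _ _).trans ?_
  exact sub_eq_zero.2 h2
end
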